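/- Fix ε ∈ (0,1] and let U_ε be a perturbed four-corner quantum walk. For every κ ∈ ℂ with Im κ ≤ 0, there exists a nonzero outgoing solution u of U_ε u = e^{−iκ}u if and only if e^{−2i(m₀+n₀)κ} ∈ {c_ε⁺, c_ε⁻}. Moreover, any outgoing solution that vanishes at every point of the images of the two closed trajectories Φ₊ and Φ₋ is identically zero; consequently, for each of c_ε⁺ and c_ε⁻ there are exactly 2(m₀+n₀) values of κ modulo 2π (so in total 4(m₀+n₀) counted with multiplicity) at which eigenvalues or resonances of U_ε occur. -/

import Mathlib

noncomputable section

namespace QWPaper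

open Complex

/-- Sites of the two-dimensional lattice. -/
abbrev Site : Type := ℤ × ℤ

/-- Chirality indices: `0 = ←`, `1 = →`, `2 = ↓`, `3 = ↑`. -/
abbrev Chir : Type := Fin 4

abbrev V : Type := EuclideanSpace ℂ (Fin 4)

/-- The Hilbert space `H = ℓ²(ℤ²; ℂ⁴)`. -/
abbrev H : Type := lp (fun _ : Site => V) 2

/-- The inner domain `Ω^i = {x : |x₁| ≤ M₀, |x₂| ≤ M₀}`. -/
def innerDom (M₀ : ℤ) : Set Site := {x | |x.1| ≤ M₀ ∧ |x.2| ≤ M₀}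

/-- `S` is the shift operator:
`(Su)(x) = (u_←(x+e₁), u_→(x−e₁), u_↓(x+e₂), u_↑(x−e₂))`. -/
def IsShiftOp (S : H →L[ℂ] H) : Prop :=
  ∀ (u : H) (x : Site),
    (S u) x 0 = u (x.1 + 1, x.2) 0 ∧
    (S u) x 1 = u (x.1 - 1, x.2) 1 ∧
    (S u) x 2 = u (x.1, x.2 + 1) 2 ∧
    (S u) x 3 = u (x.1, x.2 - 1) 3

/-- `A` is the bounded operator of pointwise multiplication by the matrix family `C`. -/
def IsCoinOp (A : H →L[ℂ] H) (C : Site → Matrix Chir Chir ℂ) : Prop :=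
  ∀ (u : H) (x : Site) (i : Chir), (A u) x i = ∑ j : Chir, C x i j * u x j

/-- Every coin matrix is unitary. -/
def IsUnitaryCoin (C : Site → Matrix Chir Chir ℂ) : Prop :=
  ∀ x, C x ∈ Matrix.unitaryGroup Chir ℂ

/-- Assumption (A-1): `C(x) = I₄` off `Ω^i`, with `M₀ ≥ 1`. -/
def SatisfiesA1 (C : Site → Matrix Chir Chir ℂ) (M₀ : ℤ) : Prop :=
  1 ≤ M₀ ∧ ∀ x, x ∉ innerDom M₀ → C x = 1

/-- `D_x(θ) = diag(e^{iθx₁}, e^{−iθx₁}, e^{iθx₂}, e^{−iθx₂})`. -/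
def Dmat (θ : ℂ) (x : Site) : Matrix Chir Chir ℂ :=
  Matrix.diagonal ![Complex.exp (Complex.I * θ * x.1), Complex.exp (-(Complex.I * θ * x.1)),
    Complex.exp (Complex.I * θ * x.2), Complex.exp (-(Complex.I * θ * x.2))]

/-- The translated coin `D_x(θ) C(x) D_x(θ)⁻¹`. -/
def transCoin (θ : ℂ) (C : Site → Matrix Chir Chir ℂ) (x : Site) : Matrix Chir Chir ℂ :=
  Dmat θ x * C x * (Dmat θ x)⁻¹

/-- The complex translated walk `U(θ) = e^{−iθ} S M(θ)`. -/
def transWalkOp (θ : ℂ) (S Mθ : H →L[ℂ] H) : H →L[ℂ] H :=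
  Complex.exp (-(Complex.I * θ)) • (S.comp Mθ)

/-- `⟨x⟩ = (1 + |x|²)^{1/2}`. -/
def jnorm (x : Site) : ℝ := Real.sqrt (1 + ((x.1 : ℝ) ^ 2 + (x.2 : ℝ) ^ 2))

/-- Super-exponentially decreasing elements of `H`: `e^{τ⟨x⟩} f ∈ H` for every `τ > 0`. -/
def SuperExpDecay (f : H) : Prop :=
  ∀ τ : ℝ, 0 < τ → Memℓp (fun x : Site => (Real.exp (τ * jnorm x) • f x : V)) 2

/-- Pointwise shift of an arbitrary `ℂ⁴`-valued map on `ℤ²`. -/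
def ptShift (v : Site → Chir → ℂ) (x : Site) : Chir → ℂ :=
  ![v (x.1 + 1, x.2) 0, v (x.1 - 1, x.2) 1, v (x.1, x.2 + 1) 2, v (x.1, x.2 - 1) 3]

/-- Pointwise coin action on an arbitrary `ℂ⁴`-valued map on `ℤ²`. -/
def ptCoin (C : Site → Matrix Chir Chir ℂ) (u : Site → Chir → ℂ) (x : Site) (i : Chir) : ℂ :=
  ∑ j : Chir, C x i j * u x j

/-- Pointwise action of the walk `U = SC` on arbitrary `ℂ⁴`-valued maps. -/
def ptWalk (C : Site → Matrix Chir Chir ℂ) (u : Site → Chir → ℂ) : Site → Chir → ℂ :=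
  ptShift (ptCoin C u)

/-- `u` is a pointwise solution of `U u = e^{−iκ} u`. -/
def IsPtSolution (C : Site → Matrix Chir Chir ℂ) (κ : ℂ) (u : Site → Chir → ℂ) : Prop :=
  ∀ (x : Site) (i : Chir), ptWalk C u x i = Complex.exp (-(Complex.I * κ)) * u x i

/-- `u` is outgoing with the explicit sequences `aL aR aD aU`. -/
def IsOutgoingWith (M₀ : ℤ) (κ : ℂ) (aL aR aD aU : ℤ → ℂ) (u : Site → Chir → ℂ) : Prop :=
  (∀ x : Site, x.1 < -M₀ → u x 0 = aL x.2 * Complex.exp (-(Complex.I * κ * x.1))) ∧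
  (∀ x : Site, M₀ < x.1 → u x 0 = 0) ∧
  (∀ x : Site, x.1 < -M₀ → u x 1 = 0) ∧
  (∀ x : Site, M₀ < x.1 → u x 1 = aR x.2 * Complex.exp (Complex.I * κ * x.1)) ∧
  (∀ x : Site, x.2 < -M₀ → u x 2 = aD x.1 * Complex.exp (-(Complex.I * κ * x.2))) ∧
  (∀ x : Site, M₀ < x.2 → u x 2 = 0) ∧
  (∀ x : Site, x.2 < -M₀ → u x 3 = 0) ∧
  (∀ x : Site, M₀ < x.2 → u x 3 = aU x.1 * Complex.exp (Complex.I * κ * x.2))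

/-- `u` is an outgoing map. -/
def IsOutgoing (M₀ : ℤ) (κ : ℂ) (u : Site → Chir → ℂ) : Prop :=
  ∃ aL aR aD aU : ℤ → ℂ, IsOutgoingWith M₀ κ aL aR aD aU u

/-- Elastic coin: column `j` of `C_el(x)` is `e^{iα_j(x)} 𝐞_{σ(x)(j)}`. -/
def elasticCoin (σ : Site → Equiv.Perm Chir) (α : Site → Chir → ℝ) (x : Site) :
    Matrix Chir Chir ℂ :=
  Matrix.of fun i j => if i = σ x j then Complex.exp (Complex.I * (α x j : ℂ)) else 0

/-- The initial state `δ_y 𝐞_j ∈ H`. -/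
def deltaState (y : Site) (j : Chir) : H := lp.single 2 y (EuclideanSpace.single j 1)

/-- `(q, p)` is the trajectory map of the elastic walk `Uel`:
`Uel^t (δ_y 𝐞_j)` is a modulus-one multiple of `δ_{q(t,y,j)} 𝐞_{p(t,y,j)}`. -/
def IsTrajectory (Uel : unitary (H →L[ℂ] H))
    (q : ℤ → Site → Chir → Site) (p : ℤ → Site → Chir → Chir) : Prop :=
  (∀ y j, q 0 y j = y ∧ p 0 y j = j) ∧
  ∀ (t : ℤ) (y : Site) (j : Chir), ∃ c : ℂ, ‖c‖ = 1 ∧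
    ((Uel ^ t : unitary (H →L[ℂ] H)) : H →L[ℂ] H) (deltaState y j)
      = c • deltaState (q t y j) (p t y j)

/-- Euclidean norm of a lattice point. -/
def znorm (x : Site) : ℝ := Real.sqrt ((x.1 : ℝ) ^ 2 + (x.2 : ℝ) ^ 2)

/-- The parts of the barrier `K`. -/
def K1p (M₀ : ℤ) : Set Site := {x | x.1 = M₀ ∧ |x.2| ≤ M₀}
def K1m (M₀ : ℤ) : Set Site := {x | x.1 = -M₀ ∧ |x.2| ≤ M₀}
def K2p (M₀ : ℤ) : Set Site := {x | x.2 = M₀ ∧ |x.1| ≤ M₀}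
def K2m (M₀ : ℤ) : Set Site := {x | x.2 = -M₀ ∧ |x.1| ≤ M₀}
def Kbar (M₀ : ℤ) : Set Site := K1p M₀ ∪ K1m M₀ ∪ K2p M₀ ∪ K2m M₀

/-- The exterior domain `Ω^e = (ℤ² \ Ω^i) ∪ K`. -/
def outerDom (M₀ : ℤ) : Set Site := {x | x ∉ innerDom M₀} ∪ Kbar M₀

/-- Membership in the interior space `H_i`. -/
def memHi (M₀ : ℤ) (u : H) : Prop :=
  (∀ x, x ∉ innerDom M₀ → ∀ i : Chir, u x i = 0) ∧
  (∀ x ∈ K1p M₀, u x 0 = 0) ∧ (∀ x ∈ K1m M₀, u x 1 = 0) ∧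
  (∀ x ∈ K2p M₀, u x 2 = 0) ∧ (∀ x ∈ K2m M₀, u x 3 = 0)

/-- Membership in the exterior space `H_e`. -/
def memHe (M₀ : ℤ) (u : H) : Prop :=
  (∀ x, x ∉ outerDom M₀ → ∀ i : Chir, u x i = 0) ∧
  (∀ x ∈ K1m M₀ ∪ K2p M₀ ∪ K2m M₀, u x 0 = 0) ∧
  (∀ x ∈ K1p M₀ ∪ K2p M₀ ∪ K2m M₀, u x 1 = 0) ∧
  (∀ x ∈ K2m M₀ ∪ K1p M₀ ∪ K1m M₀, u x 2 = 0) ∧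
  (∀ x ∈ K2p M₀ ∪ K1p M₀ ∪ K1m M₀, u x 3 = 0)

/-- The non-penetrable barrier conditions for `U_np`. -/
def IsBarrierWalk (M₀ : ℤ) (Unp : H →L[ℂ] H) : Prop :=
  ∀ u : H,
    (∀ x ∈ K1p M₀, (Unp u) (x.1 + 1, x.2) 1 = u x 0) ∧
    (∀ x ∈ K1m M₀, (Unp u) (x.1 - 1, x.2) 0 = u x 0) ∧
    (∀ x ∈ K2p M₀, (Unp u) (x.1, x.2 + 1) 3 = u x 2) ∧
    (∀ x ∈ K2m M₀, (Unp u) (x.1, x.2 - 1) 2 = u x 3)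

/-- The rectangular loop `L_{ε,s}(μ)` (boundary of the rectangle with half-widths `a`, `b`). -/
def loopSet (μ a b : ℝ) : Set ℂ :=
  {κ | |κ.re - μ| ≤ a ∧ |κ.im| ≤ b ∧ (|κ.re - μ| = a ∨ |κ.im| = b)}

/-- The four-corner elastic coin. -/
def fourCornerCoin (m₀ n₀ : ℤ) (x : Site) : Matrix Chir Chir ℂ :=
  if x = ((0 : ℤ), (0 : ℤ)) then !![0,1,0,0; 0,0,1,0; 0,0,0,1; 1,0,0,0]
  else if x = (m₀, (0 : ℤ)) then !![0,0,1,0; 1,0,0,0; 0,0,0,1; 0,1,0,0]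
  else if x = (m₀, n₀) then !![0,0,0,1; 1,0,0,0; 0,1,0,0; 0,0,1,0]
  else if x = ((0 : ℤ), n₀) then !![0,1,0,0; 0,0,0,1; 1,0,0,0; 0,0,1,0]
  else 1

/-- The four corners. -/
def corners (m₀ n₀ : ℤ) : Set Site :=
  {((0 : ℤ), (0 : ℤ)), (m₀, (0 : ℤ)), (m₀, n₀), ((0 : ℤ), n₀)}

/-- A perturbed four-corner coin `C_ε`. -/
def IsPerturbedFourCorner (m₀ n₀ : ℤ) (ε : ℝ) (Cε : Site → Matrix Chir Chir ℂ) : Prop :=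
  IsUnitaryCoin Cε ∧
  (∀ x, x ∉ corners m₀ n₀ → Cε x = 1) ∧
  (∀ x ∈ corners m₀ n₀, ∀ i j : Chir, ‖Cε x i j - fourCornerCoin m₀ n₀ x i j‖ < ε) ∧
  Cε ((0 : ℤ), (0 : ℤ)) 1 0 = 0 ∧ Cε ((0 : ℤ), (0 : ℤ)) 3 2 = 0 ∧
  Cε (m₀, (0 : ℤ)) 3 2 = 0 ∧ Cε (m₀, (0 : ℤ)) 0 1 = 0 ∧
  Cε (m₀, n₀) 2 3 = 0 ∧ Cε (m₀, n₀) 0 1 = 0 ∧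
  Cε ((0 : ℤ), n₀) 1 0 = 0 ∧ Cε ((0 : ℤ), n₀) 2 3 = 0

/-- `c_ε⁺ = c_{↑,←}(0,0) c_{←,↓}(m₀,0) c_{↓,→}(m₀,n₀) c_{→,↑}(0,n₀)`. -/
def cPlus (m₀ n₀ : ℤ) (Cε : Site → Matrix Chir Chir ℂ) : ℂ :=
  Cε ((0 : ℤ), (0 : ℤ)) 3 0 * Cε (m₀, (0 : ℤ)) 0 2 * Cε (m₀, n₀) 2 1 * Cε ((0 : ℤ), n₀) 1 3

/-- `c_ε⁻ = c_{→,↓}(0,0) c_{↑,→}(m₀,0) c_{←,↑}(m₀,n₀) c_{↓,←}(0,n₀)`. -/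
def cMinus (m₀ n₀ : ℤ) (Cε : Site → Matrix Chir Chir ℂ) : ℂ :=
  Cε ((0 : ℤ), (0 : ℤ)) 1 2 * Cε (m₀, (0 : ℤ)) 3 1 * Cε (m₀, n₀) 0 3 * Cε ((0 : ℤ), n₀) 2 0

/-- `u ∈ H` is supported on the set `A ⊆ ℤ² × {←,→,↓,↑}`. -/
def SupportedOn (u : H) (A : Set (Site × Chir)) : Prop :=
  ∀ (x : Site) (i : Chir), (x, i) ∉ A → u x i = 0

/-- The image of the closed trajectory `Φ₊` of the four-corner walk. -/
def imPhiPlus (m₀ n₀ : ℤ) : Set (Site × Chir) :=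
  {w | ∃ t : ℤ, 1 ≤ t ∧ t ≤ n₀ ∧ w = (((0 : ℤ), t), (3 : Chir))} ∪
  {w | ∃ t : ℤ, 1 ≤ t ∧ t ≤ m₀ ∧ w = ((t, n₀), (1 : Chir))} ∪
  {w | ∃ t : ℤ, 0 ≤ t ∧ t ≤ n₀ - 1 ∧ w = ((m₀, t), (2 : Chir))} ∪
  {w | ∃ t : ℤ, 0 ≤ t ∧ t ≤ m₀ - 1 ∧ w = ((t, (0 : ℤ)), (0 : Chir))}

/-- The image of the reversed closed trajectory `Φ₋` of the four-corner walk. -/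
def imPhiMinus (m₀ n₀ : ℤ) : Set (Site × Chir) :=
  {w | ∃ t : ℤ, 1 ≤ t ∧ t ≤ m₀ ∧ w = ((t, (0 : ℤ)), (1 : Chir))} ∪
  {w | ∃ t : ℤ, 1 ≤ t ∧ t ≤ n₀ ∧ w = ((m₀, t), (3 : Chir))} ∪
  {w | ∃ t : ℤ, 0 ≤ t ∧ t ≤ m₀ - 1 ∧ w = ((t, n₀), (0 : Chir))} ∪
  {w | ∃ t : ℤ, 0 ≤ t ∧ t ≤ n₀ - 1 ∧ w = (((0 : ℤ), t), (2 : Chir))}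

/-- The eight outgoing tails starting from the four corners. -/
def tails (m₀ n₀ : ℤ) : Set (Site × Chir) :=
  {w | ∃ N y₂ : ℤ, 1 ≤ N ∧ (y₂ = 0 ∨ y₂ = n₀) ∧ w = ((-N, y₂), (0 : Chir))} ∪
  {w | ∃ N y₁ : ℤ, 1 ≤ N ∧ (y₁ = 0 ∨ y₁ = m₀) ∧ w = ((y₁, n₀ + N), (3 : Chir))} ∪
  {w | ∃ N y₁ : ℤ, 1 ≤ N ∧ (y₁ = 0 ∨ y₁ = m₀) ∧ w = ((y₁, -N), (2 : Chir))} ∪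
  {w | ∃ N y₂ : ℤ, 1 ≤ N ∧ (y₂ = 0 ∨ y₂ = n₀) ∧ w = ((m₀ + N, y₂), (1 : Chir))}

/-- The shape resonance perturbation `C_ε` of the barrier coin `C_np`. -/
def IsShapePerturbation (M₀ : ℤ) (Cnp : Site → Matrix Chir Chir ℂ) (ε : ℝ)
    (Cε : Site → Matrix Chir Chir ℂ) : Prop :=
  IsUnitaryCoin Cε ∧ (∀ x, x ∉ Kbar M₀ → Cε x = Cnp x) ∧
  (∀ x ∈ Kbar M₀, ∀ i j : Chir, ‖Cε x i j - Cnp x i j‖ < ε)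

/-- Counterclockwise contour integral of an operator-valued map over the boundary of the
rectangle centered at `μ ∈ ℝ` with half-widths `a` and `b`. -/
def rectIntegral (f : ℂ → (H →L[ℂ] H)) (μ a b : ℝ) : H →L[ℂ] H :=
  ((∫ t in (μ - a)..(μ + a), f (t - b * Complex.I)) -
      (∫ t in (μ - a)..(μ + a), f (t + b * Complex.I))) +
  Complex.I • ((∫ s in (-b)..b, f ((μ + a : ℝ) + s * Complex.I)) -
      (∫ s in (-b)..b, f ((μ - a : ℝ) + s * Complex.I)))

/-- The Riesz-type projection `(1/2π) ∮ e^{−iκ} (A − e^{−iκ})^{−1} dκ` over the rectangular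
loop of half-widths `a`, `b` around `μ`. -/
def rieszProj (A : H →L[ℂ] H) (μ a b : ℝ) : H →L[ℂ] H :=
  (1 / (2 * Real.pi)) •
    rectIntegral (fun κ => Complex.exp (-(Complex.I * κ)) •
      Ring.inverse (A - Complex.exp (-(Complex.I * κ)) • (1 : H →L[ℂ] H))) μ a b

/-! ### Auxiliary lemmas for Statement 15 -/

section Aux15

open Complex

private lemma qwChainUp (lam : ℂ) (f : ℤ → ℂ) (a b : ℤ)
    (h : ∀ k, a ≤ k → k < b → f (k + 1) = lam * f k) :
    ∀ k, a ≤ k → k ≤ b → f k = lam ^ (k - a).toNat * f a := by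
  intro k hak hkb
  obtain ⟨n, rfl⟩ : ∃ n : ℕ, k = a + n := ⟨(k - a).toNat, by omega⟩
  induction n with
  | zero => simp
  | succ m ih =>
    have e1 : a + ((m : ℤ) + 1) = (a + m) + 1 := by ring
    push_cast at hak hkb ⊢
    rw [e1, h (a + m) (by omega) (by omega), ih (by omega) (by omega)]
    rw [show ((a + (m : ℤ)) - a).toNat = m by omega,
      show (a + (m : ℤ) + 1 - a).toNat = m + 1 by omega, pow_succ]
    ring

private lemma qwChainDown (lam : ℂ) (f : ℤ → ℂ) (a b : ℤ)
    (h : ∀ k, a ≤ k → k < b → f k = lam * f (k + 1)) :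
    ∀ k, a ≤ k → k ≤ b → f k = lam ^ (b - k).toNat * f b := by
  intro k hak hkb
  obtain ⟨n, rfl⟩ : ∃ n : ℕ, k = b - n := ⟨(b - k).toNat, by omega⟩
  induction n with
  | zero => simp
  | succ m ih =>
    push_cast at hak hkb ⊢
    have hrec : f (b - ((m : ℤ) + 1)) = lam * f (b - m) := by
      have h2 := h (b - ((m : ℤ) + 1)) (by omega) (by omega)
      rw [show b - ((m : ℤ) + 1) + 1 = b - (m : ℤ) by ring] at h2
      exact h2
    rw [hrec, ih (by omega) (by omega)]
    rw [show (b - (b - (m : ℤ))).toNat = m by omega,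
      show (b - (b - ((m : ℤ) + 1))).toNat = m + 1 by omega, pow_succ]
    ring

private lemma qwZeroUpOf {lam : ℂ} (hlam : lam ≠ 0) (f : ℤ → ℂ) (b : ℤ)
    (h : ∀ k, b ≤ k → f k = lam * f (k + 1)) (hb : f b = 0) :
    ∀ k, b ≤ k → f k = 0 := by
  intro k hk
  obtain ⟨n, rfl⟩ : ∃ n : ℕ, k = b + n := ⟨(k - b).toNat, by omega⟩
  clear hk
  induction n with
  | zero => simpa using hb
  | succ m ih =>
    have h1 := h (b + m) (by omega)
    rw [ih] at h1
    rw [show b + ((m : ℕ) : ℤ) + 1 = b + (((m + 1 : ℕ)) : ℤ) by push_cast; ring] at h1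
    rcases mul_eq_zero.mp h1.symm with h' | h'
    · exact absurd h' hlam
    · exact h'

private lemma qwZeroDownOf {lam : ℂ} (hlam : lam ≠ 0) (f : ℤ → ℂ) (b : ℤ)
    (h : ∀ k, k < b → f (k + 1) = lam * f k) (hb : f b = 0) :
    ∀ k, k ≤ b → f k = 0 := by
  intro k hk
  have h1 := qwChainUp lam f k b (fun j _ hjb => h j hjb) b hk le_rfl
  rw [hb] at h1
  rcases mul_eq_zero.mp h1.symm with h' | h'
  · exact absurd h' (pow_ne_zero _ hlam)
  · exact h'

private lemma qwZeroFromRight {lam : ℂ} (hlam : lam ≠ 0) (f : ℤ → ℂ) (a M : ℤ)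
    (h : ∀ k, a ≤ k → f (k + 1) = lam * f k) (h0 : ∀ k, M < k → f k = 0) :
    ∀ k, a ≤ k → f k = 0 := by
  intro k hk
  rcases lt_or_ge M k with h' | h'
  · exact h0 k h'
  · have h1 := qwChainUp lam f k (M + 1) (fun j hj _ => h j (le_trans hk hj)) (M + 1)
      (by omega) le_rfl
    rw [h0 (M + 1) (by omega)] at h1
    rcases mul_eq_zero.mp h1.symm with h'' | h''
    · exact absurd h'' (pow_ne_zero _ hlam)
    · exact h''

private lemma qwZeroFromLeft {lam : ℂ} (hlam : lam ≠ 0) (f : ℤ → ℂ) (b M : ℤ)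
    (h : ∀ k, k < b → f k = lam * f (k + 1)) (h0 : ∀ k, k < M → f k = 0) :
    ∀ k, k ≤ b → f k = 0 := by
  intro k hk
  rcases lt_or_ge k M with h' | h'
  · exact h0 k h'
  · have h1 := qwChainDown lam f (M - 1) k (fun j _ hjk => h j (by omega)) (M - 1) le_rfl
      (by omega)
    rw [h0 (M - 1) (by omega)] at h1
    rcases mul_eq_zero.mp h1.symm with h'' | h''
    · exact absurd h'' (pow_ne_zero _ hlam)
    · exact h''

private lemma mem_corners_iff {m₀ n₀ p q : ℤ} :
    ((p, q) : Site) ∈ corners m₀ n₀ ↔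
      (p = 0 ∧ q = 0) ∨ (p = m₀ ∧ q = 0) ∨ (p = m₀ ∧ q = n₀) ∨ (p = 0 ∧ q = n₀) := by
  simp [corners, Prod.ext_iff]

private lemma isPtSolution_iff' (C : Site → Matrix Chir Chir ℂ) (κ : ℂ) (u : Site → Chir → ℂ) :
    IsPtSolution C κ u ↔ ∀ p q : ℤ,
      (C (p, q) 0 0 * u (p, q) 0 + C (p, q) 0 1 * u (p, q) 1 + C (p, q) 0 2 * u (p, q) 2 +
          C (p, q) 0 3 * u (p, q) 3 = Complex.exp (-(Complex.I * κ)) * u (p - 1, q) 0) ∧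
      (C (p, q) 1 0 * u (p, q) 0 + C (p, q) 1 1 * u (p, q) 1 + C (p, q) 1 2 * u (p, q) 2 +
          C (p, q) 1 3 * u (p, q) 3 = Complex.exp (-(Complex.I * κ)) * u (p + 1, q) 1) ∧
      (C (p, q) 2 0 * u (p, q) 0 + C (p, q) 2 1 * u (p, q) 1 + C (p, q) 2 2 * u (p, q) 2 +
          C (p, q) 2 3 * u (p, q) 3 = Complex.exp (-(Complex.I * κ)) * u (p, q - 1) 2) ∧
      (C (p, q) 3 0 * u (p, q) 0 + C (p, q) 3 1 * u (p, q) 1 + C (p, q) 3 2 * u (p, q) 2 +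
          C (p, q) 3 3 * u (p, q) 3 = Complex.exp (-(Complex.I * κ)) * u (p, q + 1) 3) := by
  constructor
  · intro h p q
    refine ⟨?_, ?_, ?_, ?_⟩
    · simpa [ptWalk, ptShift, ptCoin, Fin.sum_univ_four] using h (p - 1, q) 0
    · simpa [ptWalk, ptShift, ptCoin, Fin.sum_univ_four] using h (p + 1, q) 1
    · simpa [ptWalk, ptShift, ptCoin, Fin.sum_univ_four] using h (p, q - 1) 2
    · simpa [ptWalk, ptShift, ptCoin, Fin.sum_univ_four] using h (p, q + 1) 3
  · intro h x i
    fin_cases i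
    · simpa [ptWalk, ptShift, ptCoin, Fin.sum_univ_four] using (h (x.1 + 1) x.2).1
    · simpa [ptWalk, ptShift, ptCoin, Fin.sum_univ_four] using (h (x.1 - 1) x.2).2.1
    · simpa [ptWalk, ptShift, ptCoin, Fin.sum_univ_four] using (h x.1 (x.2 + 1)).2.2.1
    · simpa [ptWalk, ptShift, ptCoin, Fin.sum_univ_four] using (h x.1 (x.2 - 1)).2.2.2
private lemma keyLemma (m₀ n₀ : ℤ) (hm : 1 ≤ m₀) (hn : 1 ≤ n₀) (ε : ℝ)
    (Cε : Site → Matrix Chir Chir ℂ) (hCε : IsPerturbedFourCorner m₀ n₀ ε Cε)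
    (κ : ℂ) (u : Site → Chir → ℂ)
    (hout : IsOutgoing (max m₀ n₀) κ u) (hsol : IsPtSolution Cε κ u) :
    (Complex.exp (-(Complex.I * κ)) ^ (2 * (m₀ + n₀)).toNat * u (0, 0) 0
        = cPlus m₀ n₀ Cε * u (0, 0) 0) ∧
    (Complex.exp (-(Complex.I * κ)) ^ (2 * (m₀ + n₀)).toNat * u (0, 0) 2
        = cMinus m₀ n₀ Cε * u (0, 0) 2) ∧
    (u (0, 0) 0 = 0 → u (0, 0) 2 = 0 → ∀ (x : Site) (i : Chir), u x i = 0) := by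
  obtain ⟨hU, hoff, hnear, z1, z2, z3, z4, z5, z6, z7, z8⟩ := hCε
  set lam := Complex.exp (-(Complex.I * κ)) with hlamdef
  have hlam : lam ≠ 0 := Complex.exp_ne_zero _
  have hrel := (isPtSolution_iff' Cε κ u).mp hsol
  obtain ⟨aL, aR, aD, aU, o1, o2, o3, o4, o5, o6, o7, o8⟩ := hout
  set M := max m₀ n₀ with hMdef
  have hMm : m₀ ≤ M := le_max_left _ _
  have hMn : n₀ ≤ M := le_max_right _ _
  have hC1 : ∀ p q : ℤ, ¬(p = 0 ∧ q = 0) → ¬(p = m₀ ∧ q = 0) → ¬(p = m₀ ∧ q = n₀) →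
      ¬(p = 0 ∧ q = n₀) → Cε (p, q) = 1 := by
    intro p q h1 h2 h3 h4
    exact hoff (p, q) (by rw [mem_corners_iff]; tauto)
  have fL : ∀ p q : ℤ, ¬(p = 0 ∧ q = 0) → ¬(p = m₀ ∧ q = 0) → ¬(p = m₀ ∧ q = n₀) →
      ¬(p = 0 ∧ q = n₀) → u (p, q) 0 = lam * u (p - 1, q) 0 := by
    intro p q h1 h2 h3 h4
    have h := (hrel p q).1
    rw [hC1 p q h1 h2 h3 h4] at h
    simpa [Matrix.one_apply] using h
  have fR : ∀ p q : ℤ, ¬(p = 0 ∧ q = 0) → ¬(p = m₀ ∧ q = 0) → ¬(p = m₀ ∧ q = n₀) →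
      ¬(p = 0 ∧ q = n₀) → u (p, q) 1 = lam * u (p + 1, q) 1 := by
    intro p q h1 h2 h3 h4
    have h := (hrel p q).2.1
    rw [hC1 p q h1 h2 h3 h4] at h
    simpa [Matrix.one_apply] using h
  have fD : ∀ p q : ℤ, ¬(p = 0 ∧ q = 0) → ¬(p = m₀ ∧ q = 0) → ¬(p = m₀ ∧ q = n₀) →
      ¬(p = 0 ∧ q = n₀) → u (p, q) 2 = lam * u (p, q - 1) 2 := by
    intro p q h1 h2 h3 h4
    have h := (hrel p q).2.2.1
    rw [hC1 p q h1 h2 h3 h4] at h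
    simpa [Matrix.one_apply] using h
  have fU : ∀ p q : ℤ, ¬(p = 0 ∧ q = 0) → ¬(p = m₀ ∧ q = 0) → ¬(p = m₀ ∧ q = n₀) →
      ¬(p = 0 ∧ q = n₀) → u (p, q) 3 = lam * u (p, q + 1) 3 := by
    intro p q h1 h2 h3 h4
    have h := (hrel p q).2.2.2
    rw [hC1 p q h1 h2 h3 h4] at h
    simpa [Matrix.one_apply] using h
  have fL' : ∀ k q : ℤ, ¬(k + 1 = 0 ∧ q = 0) → ¬(k + 1 = m₀ ∧ q = 0) → ¬(k + 1 = m₀ ∧ q = n₀) →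
      ¬(k + 1 = 0 ∧ q = n₀) → u (k + 1, q) 0 = lam * u (k, q) 0 := by
    intro k q h1 h2 h3 h4
    simpa using fL (k + 1) q h1 h2 h3 h4
  have fD' : ∀ p k : ℤ, ¬(p = 0 ∧ k + 1 = 0) → ¬(p = m₀ ∧ k + 1 = 0) → ¬(p = m₀ ∧ k + 1 = n₀) →
      ¬(p = 0 ∧ k + 1 = n₀) → u (p, k + 1) 2 = lam * u (p, k) 2 := by
    intro p k h1 h2 h3 h4
    simpa using fD p (k + 1) h1 h2 h3 h4
  -- Zero fields on generic lines/columns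
  have Z1L : ∀ q, q ≠ 0 → q ≠ n₀ → ∀ p, u (p, q) 0 = 0 := by
    intro q hq0 hqn p
    exact qwZeroFromRight hlam (fun t => u (t, q) 0) p M
      (fun k _ => fL' k q (by omega) (by omega) (by omega) (by omega))
      (fun k hk => o2 (k, q) hk) p le_rfl
  have Z1R : ∀ q, q ≠ 0 → q ≠ n₀ → ∀ p, u (p, q) 1 = 0 := by
    intro q hq0 hqn p
    exact qwZeroFromLeft hlam (fun t => u (t, q) 1) p (-M)
      (fun k _ => fR k q (by omega) (by omega) (by omega) (by omega))
      (fun k hk => o3 (k, q) hk) p le_rfl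
  have Z2D : ∀ p, p ≠ 0 → p ≠ m₀ → ∀ q, u (p, q) 2 = 0 := by
    intro p hp0 hpm q
    exact qwZeroFromRight hlam (fun t => u (p, t) 2) q M
      (fun k _ => fD' p k (by omega) (by omega) (by omega) (by omega))
      (fun k hk => o6 (p, k) hk) q le_rfl
  have Z2U : ∀ p, p ≠ 0 → p ≠ m₀ → ∀ q, u (p, q) 3 = 0 := by
    intro p hp0 hpm q
    exact qwZeroFromLeft hlam (fun t => u (p, t) 3) q (-M)
      (fun k _ => fU p k (by omega) (by omega) (by omega) (by omega))
      (fun k hk => o7 (p, k) hk) q le_rfl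
  -- Zero fields on half-lines
  have Z3a : ∀ p, m₀ ≤ p → u (p, 0) 0 = 0 := by
    intro p hp
    exact qwZeroFromRight hlam (fun t => u (t, 0) 0) m₀ M
      (fun k hk => fL' k 0 (by omega) (by omega) (by omega) (by omega))
      (fun k hk => o2 (k, 0) hk) p hp
  have Z3b : ∀ p, p ≤ 0 → u (p, 0) 1 = 0 := by
    intro p hp
    exact qwZeroFromLeft hlam (fun t => u (t, 0) 1) 0 (-M)
      (fun k hk => fR k 0 (by omega) (by omega) (by omega) (by omega))
      (fun k hk => o3 (k, 0) hk) p hp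
  have Z4a : ∀ p, m₀ ≤ p → u (p, n₀) 0 = 0 := by
    intro p hp
    exact qwZeroFromRight hlam (fun t => u (t, n₀) 0) m₀ M
      (fun k hk => fL' k n₀ (by omega) (by omega) (by omega) (by omega))
      (fun k hk => o2 (k, n₀) hk) p hp
  have Z4b : ∀ p, p ≤ 0 → u (p, n₀) 1 = 0 := by
    intro p hp
    exact qwZeroFromLeft hlam (fun t => u (t, n₀) 1) 0 (-M)
      (fun k hk => fR k n₀ (by omega) (by omega) (by omega) (by omega))
      (fun k hk => o3 (k, n₀) hk) p hp
  have Z5a : ∀ q, n₀ ≤ q → u (0, q) 2 = 0 := by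
    intro q hq
    exact qwZeroFromRight hlam (fun t => u (0, t) 2) n₀ M
      (fun k hk => fD' 0 k (by omega) (by omega) (by omega) (by omega))
      (fun k hk => o6 (0, k) hk) q hq
  have Z5b : ∀ q, q ≤ 0 → u (0, q) 3 = 0 := by
    intro q hq
    exact qwZeroFromLeft hlam (fun t => u (0, t) 3) 0 (-M)
      (fun k hk => fU 0 k (by omega) (by omega) (by omega) (by omega))
      (fun k hk => o7 (0, k) hk) q hq
  have Z6a : ∀ q, n₀ ≤ q → u (m₀, q) 2 = 0 := by
    intro q hq
    exact qwZeroFromRight hlam (fun t => u (m₀, t) 2) n₀ M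
      (fun k hk => fD' m₀ k (by omega) (by omega) (by omega) (by omega))
      (fun k hk => o6 (m₀, k) hk) q hq
  have Z6b : ∀ q, q ≤ 0 → u (m₀, q) 3 = 0 := by
    intro q hq
    exact qwZeroFromLeft hlam (fun t => u (m₀, t) 3) 0 (-M)
      (fun k hk => fU m₀ k (by omega) (by omega) (by omega) (by omega))
      (fun k hk => o7 (m₀, k) hk) q hq
  -- Values along the `+` loop
  have V1 : ∀ p, 0 ≤ p → p ≤ m₀ - 1 → u (p, 0) 0 = lam ^ p.toNat * u (0, 0) 0 := by
    intro p h1 h2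
    have h := qwChainUp lam (fun t => u (t, 0) 0) 0 (m₀ - 1)
      (fun k hk hk' => fL' k 0 (by omega) (by omega) (by omega) (by omega)) p h1 h2
    simpa using h
  have V2 : ∀ q, 1 ≤ q → q ≤ n₀ →
      lam ^ q.toNat * u (0, q) 3 = Cε (0, 0) 3 0 * u (0, 0) 0 := by
    have base : lam * u (0, 1) 3 = Cε (0, 0) 3 0 * u (0, 0) 0 := by
      have h := (hrel 0 0).2.2.2
      rw [Z3b 0 le_rfl, Z5b 0 le_rfl, z2, show (0 : ℤ) + 1 = 1 by norm_num] at h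
      linear_combination -h
    intro q h1 h2
    have hc : u (0, 1) 3 = lam ^ (q - 1).toNat * u (0, q) 3 :=
      qwChainDown lam (fun t => u (0, t) 3) 1 q
        (fun k hk hk' => fU 0 k (by omega) (by omega) (by omega) (by omega)) 1 le_rfl h1
    rw [show q.toNat = (q - 1).toNat + 1 by omega, pow_succ]
    linear_combination base - lam * hc
  have V3 : ∀ p, 1 ≤ p → p ≤ m₀ →
      lam ^ (n₀ + p).toNat * u (p, n₀) 1
        = Cε (0, n₀) 1 3 * (Cε (0, 0) 3 0 * u (0, 0) 0) := by
    have base : lam ^ (n₀ + 1).toNat * u (1, n₀) 1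
        = Cε (0, n₀) 1 3 * (Cε (0, 0) 3 0 * u (0, 0) 0) := by
      have h := (hrel 0 n₀).2.1
      rw [z7, Z4b 0 le_rfl, Z5a n₀ le_rfl, show (0 : ℤ) + 1 = 1 by norm_num] at h
      have hV2 := V2 n₀ hn le_rfl
      rw [show (n₀ + 1).toNat = n₀.toNat + 1 by omega, pow_succ]
      linear_combination Cε (0, n₀) 1 3 * hV2 - lam ^ n₀.toNat * h
    intro p h1 h2
    have hc : u (1, n₀) 1 = lam ^ (p - 1).toNat * u (p, n₀) 1 :=
      qwChainDown lam (fun t => u (t, n₀) 1) 1 p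
        (fun k hk hk' => fR k n₀ (by omega) (by omega) (by omega) (by omega)) 1 le_rfl h1
    rw [show (n₀ + p).toNat = (n₀ + 1).toNat + (p - 1).toNat by omega, pow_add]
    linear_combination base - lam ^ (n₀ + 1).toNat * hc
  have V4 : ∀ q, 0 ≤ q → q ≤ n₀ - 1 →
      lam ^ (2 * n₀ + m₀ - q).toNat * u (m₀, q) 2
        = Cε (m₀, n₀) 2 1 * (Cε (0, n₀) 1 3 * (Cε (0, 0) 3 0 * u (0, 0) 0)) := by
    have base : lam ^ (n₀ + m₀ + 1).toNat * u (m₀, n₀ - 1) 2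
        = Cε (m₀, n₀) 2 1 * (Cε (0, n₀) 1 3 * (Cε (0, 0) 3 0 * u (0, 0) 0)) := by
      have h := (hrel m₀ n₀).2.2.1
      rw [Z4a m₀ le_rfl, Z6a n₀ le_rfl, z5] at h
      have hV3 := V3 m₀ hm le_rfl
      rw [show (n₀ + m₀ + 1).toNat = (n₀ + m₀).toNat + 1 by omega, pow_succ]
      linear_combination Cε (m₀, n₀) 2 1 * hV3 - lam ^ (n₀ + m₀).toNat * h
    intro q h1 h2
    have hc : u (m₀, n₀ - 1) 2 = lam ^ (n₀ - 1 - q).toNat * u (m₀, q) 2 :=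
      qwChainUp lam (fun t => u (m₀, t) 2) q (n₀ - 1)
        (fun k hk hk' => fD' m₀ k (by omega) (by omega) (by omega) (by omega)) (n₀ - 1) h2
        le_rfl
    rw [show (2 * n₀ + m₀ - q).toNat = (n₀ + m₀ + 1).toNat + (n₀ - 1 - q).toNat by omega,
      pow_add]
    linear_combination base - lam ^ (n₀ + m₀ + 1).toNat * hc
  have V5 : lam ^ (2 * (m₀ + n₀)).toNat * u (0, 0) 0 = cPlus m₀ n₀ Cε * u (0, 0) 0 := by
    have h := (hrel m₀ 0).1
    rw [Z3a m₀ le_rfl, Z6b 0 le_rfl, z4] at h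
    have hV1 := V1 (m₀ - 1) (by omega) le_rfl
    have hV4 := V4 0 le_rfl (by omega)
    simp only [cPlus]
    rw [show (2 * (m₀ + n₀)).toNat = (2 * n₀ + m₀ - 0).toNat + ((m₀ - 1).toNat + 1) by omega,
      pow_add, pow_succ]
    linear_combination Cε (m₀, 0) 0 2 * hV4 - lam ^ (2 * n₀ + m₀ - 0).toNat * h
      - lam ^ (2 * n₀ + m₀ - 0).toNat * lam * hV1
  -- Values along the `-` loop
  have V1' : ∀ q, 0 ≤ q → q ≤ n₀ - 1 → u (0, q) 2 = lam ^ q.toNat * u (0, 0) 2 := by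
    intro q h1 h2
    have h := qwChainUp lam (fun t => u (0, t) 2) 0 (n₀ - 1)
      (fun k hk hk' => fD' 0 k (by omega) (by omega) (by omega) (by omega)) q h1 h2
    simpa using h
  have V2' : ∀ p, 1 ≤ p → p ≤ m₀ →
      lam ^ p.toNat * u (p, 0) 1 = Cε (0, 0) 1 2 * u (0, 0) 2 := by
    have base : lam * u (1, 0) 1 = Cε (0, 0) 1 2 * u (0, 0) 2 := by
      have h := (hrel 0 0).2.1
      rw [z1, Z3b 0 le_rfl, Z5b 0 le_rfl, show (0 : ℤ) + 1 = 1 by norm_num] at h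
      linear_combination -h
    intro p h1 h2
    have hc : u (1, 0) 1 = lam ^ (p - 1).toNat * u (p, 0) 1 :=
      qwChainDown lam (fun t => u (t, 0) 1) 1 p
        (fun k hk hk' => fR k 0 (by omega) (by omega) (by omega) (by omega)) 1 le_rfl h1
    rw [show p.toNat = (p - 1).toNat + 1 by omega, pow_succ]
    linear_combination base - lam * hc
  have V3' : ∀ q, 1 ≤ q → q ≤ n₀ →
      lam ^ (m₀ + q).toNat * u (m₀, q) 3
        = Cε (m₀, 0) 3 1 * (Cε (0, 0) 1 2 * u (0, 0) 2) := by
    have base : lam ^ (m₀ + 1).toNat * u (m₀, 1) 3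
        = Cε (m₀, 0) 3 1 * (Cε (0, 0) 1 2 * u (0, 0) 2) := by
      have h := (hrel m₀ 0).2.2.2
      rw [Z3a m₀ le_rfl, z3, Z6b 0 le_rfl, show (0 : ℤ) + 1 = 1 by norm_num] at h
      have hV2' := V2' m₀ hm le_rfl
      rw [show (m₀ + 1).toNat = m₀.toNat + 1 by omega, pow_succ]
      linear_combination Cε (m₀, 0) 3 1 * hV2' - lam ^ m₀.toNat * h
    intro q h1 h2
    have hc : u (m₀, 1) 3 = lam ^ (q - 1).toNat * u (m₀, q) 3 :=
      qwChainDown lam (fun t => u (m₀, t) 3) 1 q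
        (fun k hk hk' => fU m₀ k (by omega) (by omega) (by omega) (by omega)) 1 le_rfl h1
    rw [show (m₀ + q).toNat = (m₀ + 1).toNat + (q - 1).toNat by omega, pow_add]
    linear_combination base - lam ^ (m₀ + 1).toNat * hc
  have V4' : ∀ p, 0 ≤ p → p ≤ m₀ - 1 →
      lam ^ (2 * m₀ + n₀ - p).toNat * u (p, n₀) 0
        = Cε (m₀, n₀) 0 3 * (Cε (m₀, 0) 3 1 * (Cε (0, 0) 1 2 * u (0, 0) 2)) := by
    have base : lam ^ (m₀ + n₀ + 1).toNat * u (m₀ - 1, n₀) 0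
        = Cε (m₀, n₀) 0 3 * (Cε (m₀, 0) 3 1 * (Cε (0, 0) 1 2 * u (0, 0) 2)) := by
      have h := (hrel m₀ n₀).1
      rw [Z4a m₀ le_rfl, z6, Z6a n₀ le_rfl] at h
      have hV3' := V3' n₀ hn le_rfl
      rw [show (m₀ + n₀ + 1).toNat = (m₀ + n₀).toNat + 1 by omega, pow_succ]
      linear_combination Cε (m₀, n₀) 0 3 * hV3' - lam ^ (m₀ + n₀).toNat * h
    intro p h1 h2
    have hc : u (m₀ - 1, n₀) 0 = lam ^ (m₀ - 1 - p).toNat * u (p, n₀) 0 :=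
      qwChainUp lam (fun t => u (t, n₀) 0) p (m₀ - 1)
        (fun k hk hk' => fL' k n₀ (by omega) (by omega) (by omega) (by omega)) (m₀ - 1) h2
        le_rfl
    rw [show (2 * m₀ + n₀ - p).toNat = (m₀ + n₀ + 1).toNat + (m₀ - 1 - p).toNat by omega,
      pow_add]
    linear_combination base - lam ^ (m₀ + n₀ + 1).toNat * hc
  have V5' : lam ^ (2 * (m₀ + n₀)).toNat * u (0, 0) 2 = cMinus m₀ n₀ Cε * u (0, 0) 2 := by
    have h := (hrel 0 n₀).2.2.1
    rw [Z4b 0 le_rfl, Z5a n₀ le_rfl, z8] at h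
    have hV1' := V1' (n₀ - 1) (by omega) le_rfl
    have hV4' := V4' 0 le_rfl (by omega)
    simp only [cMinus]
    rw [show (2 * (m₀ + n₀)).toNat = (2 * m₀ + n₀ - 0).toNat + ((n₀ - 1).toNat + 1) by omega,
      pow_add, pow_succ]
    linear_combination Cε (0, n₀) 2 0 * hV4' - lam ^ (2 * m₀ + n₀ - 0).toNat * h
      - lam ^ (2 * m₀ + n₀ - 0).toNat * lam * hV1'
  refine ⟨V5, V5', ?_⟩
  -- vanishing part
  intro hα hγ
  have hcan : ∀ (n : ℕ) (w : ℂ), lam ^ n * w = 0 → w = 0 := by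
    intro n w hw
    rcases mul_eq_zero.mp hw with h' | h'
    · exact absurd h' (pow_ne_zero _ hlam)
    · exact h'
  have S1 : ∀ p, 0 ≤ p → p ≤ m₀ - 1 → u (p, 0) 0 = 0 := by
    intro p h1 h2; rw [V1 p h1 h2, hα, mul_zero]
  have S2 : ∀ q, 1 ≤ q → q ≤ n₀ → u (0, q) 3 = 0 := by
    intro q h1 h2
    have h := V2 q h1 h2
    rw [hα] at h; simp only [mul_zero] at h
    exact hcan _ _ h
  have S3 : ∀ p, 1 ≤ p → p ≤ m₀ → u (p, n₀) 1 = 0 := by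
    intro p h1 h2
    have h := V3 p h1 h2
    rw [hα] at h; simp only [mul_zero] at h
    exact hcan _ _ h
  have S4 : ∀ q, 0 ≤ q → q ≤ n₀ - 1 → u (m₀, q) 2 = 0 := by
    intro q h1 h2
    have h := V4 q h1 h2
    rw [hα] at h; simp only [mul_zero] at h
    exact hcan _ _ h
  have S1' : ∀ q, 0 ≤ q → q ≤ n₀ - 1 → u (0, q) 2 = 0 := by
    intro q h1 h2; rw [V1' q h1 h2, hγ, mul_zero]
  have S2' : ∀ p, 1 ≤ p → p ≤ m₀ → u (p, 0) 1 = 0 := by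
    intro p h1 h2
    have h := V2' p h1 h2
    rw [hγ] at h; simp only [mul_zero] at h
    exact hcan _ _ h
  have S3' : ∀ q, 1 ≤ q → q ≤ n₀ → u (m₀, q) 3 = 0 := by
    intro q h1 h2
    have h := V3' q h1 h2
    rw [hγ] at h; simp only [mul_zero] at h
    exact hcan _ _ h
  have S4' : ∀ p, 0 ≤ p → p ≤ m₀ - 1 → u (p, n₀) 0 = 0 := by
    intro p h1 h2
    have h := V4' p h1 h2
    rw [hγ] at h; simp only [mul_zero] at h
    exact hcan _ _ h
  -- the eight outgoing tails vanish
  have T1 : ∀ p, p ≤ -1 → u (p, 0) 0 = 0 := by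
    have hb : u (-1, 0) 0 = 0 := by
      have h := (hrel 0 0).1
      rw [hα, hγ, Z3b 0 le_rfl, Z5b 0 le_rfl, show (0 : ℤ) - 1 = -1 by norm_num] at h
      have h2 : lam * u (-1, 0) 0 = 0 := by linear_combination -h
      exact (mul_eq_zero.mp h2).resolve_left hlam
    intro p hp
    exact qwZeroDownOf hlam (fun t => u (t, 0) 0) (-1)
      (fun k hk => fL' k 0 (by omega) (by omega) (by omega) (by omega)) hb p hp
  have T2 : ∀ p, p ≤ -1 → u (p, n₀) 0 = 0 := by
    have hb : u (-1, n₀) 0 = 0 := by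
      have h := (hrel 0 n₀).1
      rw [S4' 0 le_rfl (by omega), Z4b 0 le_rfl, Z5a n₀ le_rfl, S2 n₀ hn le_rfl,
        show (0 : ℤ) - 1 = -1 by norm_num] at h
      have h2 : lam * u (-1, n₀) 0 = 0 := by linear_combination -h
      exact (mul_eq_zero.mp h2).resolve_left hlam
    intro p hp
    exact qwZeroDownOf hlam (fun t => u (t, n₀) 0) (-1)
      (fun k hk => fL' k n₀ (by omega) (by omega) (by omega) (by omega)) hb p hp
  have T3 : ∀ p, m₀ + 1 ≤ p → u (p, 0) 1 = 0 := by
    have hb : u (m₀ + 1, 0) 1 = 0 := by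
      have h := (hrel m₀ 0).2.1
      rw [Z3a m₀ le_rfl, S2' m₀ hm le_rfl, S4 0 le_rfl (by omega), Z6b 0 le_rfl] at h
      have h2 : lam * u (m₀ + 1, 0) 1 = 0 := by linear_combination -h
      exact (mul_eq_zero.mp h2).resolve_left hlam
    intro p hp
    exact qwZeroUpOf hlam (fun t => u (t, 0) 1) (m₀ + 1)
      (fun k hk => fR k 0 (by omega) (by omega) (by omega) (by omega)) hb p hp
  have T4 : ∀ p, m₀ + 1 ≤ p → u (p, n₀) 1 = 0 := by
    have hb : u (m₀ + 1, n₀) 1 = 0 := by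
      have h := (hrel m₀ n₀).2.1
      rw [Z4a m₀ le_rfl, S3 m₀ hm le_rfl, Z6a n₀ le_rfl, S3' n₀ hn le_rfl] at h
      have h2 : lam * u (m₀ + 1, n₀) 1 = 0 := by linear_combination -h
      exact (mul_eq_zero.mp h2).resolve_left hlam
    intro p hp
    exact qwZeroUpOf hlam (fun t => u (t, n₀) 1) (m₀ + 1)
      (fun k hk => fR k n₀ (by omega) (by omega) (by omega) (by omega)) hb p hp
  have T5 : ∀ q, q ≤ -1 → u (0, q) 2 = 0 := by
    have hb : u (0, -1) 2 = 0 := by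
      have h := (hrel 0 0).2.2.1
      rw [hα, hγ, Z3b 0 le_rfl, Z5b 0 le_rfl, show (0 : ℤ) - 1 = -1 by norm_num] at h
      have h2 : lam * u (0, -1) 2 = 0 := by linear_combination -h
      exact (mul_eq_zero.mp h2).resolve_left hlam
    intro q hq
    exact qwZeroDownOf hlam (fun t => u (0, t) 2) (-1)
      (fun k hk => fD' 0 k (by omega) (by omega) (by omega) (by omega)) hb q hq
  have T6 : ∀ q, q ≤ -1 → u (m₀, q) 2 = 0 := by
    have hb : u (m₀, -1) 2 = 0 := by
      have h := (hrel m₀ 0).2.2.1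
      rw [Z3a m₀ le_rfl, S2' m₀ hm le_rfl, S4 0 le_rfl (by omega), Z6b 0 le_rfl,
        show (0 : ℤ) - 1 = -1 by norm_num] at h
      have h2 : lam * u (m₀, -1) 2 = 0 := by linear_combination -h
      exact (mul_eq_zero.mp h2).resolve_left hlam
    intro q hq
    exact qwZeroDownOf hlam (fun t => u (m₀, t) 2) (-1)
      (fun k hk => fD' m₀ k (by omega) (by omega) (by omega) (by omega)) hb q hq
  have T7 : ∀ q, n₀ + 1 ≤ q → u (0, q) 3 = 0 := by
    have hb : u (0, n₀ + 1) 3 = 0 := by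
      have h := (hrel 0 n₀).2.2.2
      rw [S4' 0 le_rfl (by omega), Z4b 0 le_rfl, Z5a n₀ le_rfl, S2 n₀ hn le_rfl] at h
      have h2 : lam * u (0, n₀ + 1) 3 = 0 := by linear_combination -h
      exact (mul_eq_zero.mp h2).resolve_left hlam
    intro q hq
    exact qwZeroUpOf hlam (fun t => u (0, t) 3) (n₀ + 1)
      (fun k hk => fU 0 k (by omega) (by omega) (by omega) (by omega)) hb q hq
  have T8 : ∀ q, n₀ + 1 ≤ q → u (m₀, q) 3 = 0 := by
    have hb : u (m₀, n₀ + 1) 3 = 0 := by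
      have h := (hrel m₀ n₀).2.2.2
      rw [Z4a m₀ le_rfl, S3 m₀ hm le_rfl, Z6a n₀ le_rfl, S3' n₀ hn le_rfl] at h
      have h2 : lam * u (m₀, n₀ + 1) 3 = 0 := by linear_combination -h
      exact (mul_eq_zero.mp h2).resolve_left hlam
    intro q hq
    exact qwZeroUpOf hlam (fun t => u (m₀, t) 3) (n₀ + 1)
      (fun k hk => fU m₀ k (by omega) (by omega) (by omega) (by omega)) hb q hq
  -- coverage
  intro x i
  obtain ⟨p, q⟩ := x
  fin_cases i
  · by_cases hq0 : q = 0
    · subst hq0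
      rcases le_or_gt p (-1) with h | h
      · exact T1 p h
      · rcases le_or_gt m₀ p with h' | h'
        · exact Z3a p h'
        · exact S1 p (by omega) (by omega)
    · by_cases hqn : q = n₀
      · subst hqn
        rcases le_or_gt p (-1) with h | h
        · exact T2 p h
        · rcases le_or_gt m₀ p with h' | h'
          · exact Z4a p h'
          · exact S4' p (by omega) (by omega)
      · exact Z1L q hq0 hqn p
  · by_cases hq0 : q = 0
    · subst hq0
      rcases le_or_gt p 0 with h | h
      · exact Z3b p h
      · rcases le_or_gt p m₀ with h' | h'
        · exact S2' p (by omega) h'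
        · exact T3 p (by omega)
    · by_cases hqn : q = n₀
      · subst hqn
        rcases le_or_gt p 0 with h | h
        · exact Z4b p h
        · rcases le_or_gt p m₀ with h' | h'
          · exact S3 p (by omega) h'
          · exact T4 p (by omega)
      · exact Z1R q hq0 hqn p
  · by_cases hp0 : p = 0
    · subst hp0
      rcases le_or_gt q (-1) with h | h
      · exact T5 q h
      · rcases le_or_gt n₀ q with h' | h'
        · exact Z5a q h'
        · exact S1' q (by omega) (by omega)
    · by_cases hpm : p = m₀
      · subst hpm
        rcases le_or_gt q (-1) with h | h
        · exact T6 q h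
        · rcases le_or_gt n₀ q with h' | h'
          · exact Z6a q h'
          · exact S4 q (by omega) (by omega)
      · exact Z2D p hp0 hpm q
  · by_cases hp0 : p = 0
    · subst hp0
      rcases le_or_gt q 0 with h | h
      · exact Z5b q h
      · rcases le_or_gt q n₀ with h' | h'
        · exact S2 q (by omega) h'
        · exact T7 q (by omega)
    · by_cases hpm : p = m₀
      · subst hpm
        rcases le_or_gt q 0 with h | h
        · exact Z6b q h
        · rcases le_or_gt q n₀ with h' | h'
          · exact S3' q (by omega) h'
          · exact T8 q (by omega)
      · exact Z2U p hp0 hpm q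
private def upFun (m₀ n₀ : ℤ) (Cε : Site → Matrix Chir Chir ℂ) (lam : ℂ) : Site → Chir → ℂ :=
  fun x =>
  ![ if x.2 = 0 then
        (if m₀ ≤ x.1 then 0 else if 0 ≤ x.1 then lam ^ x.1 else Cε (0, 0) 0 0 * lam ^ x.1)
      else if x.2 = n₀ then
        (if 0 ≤ x.1 then 0 else Cε (0, n₀) 0 3 * Cε (0, 0) 3 0 * lam ^ (x.1 - n₀))
      else 0,
     if x.2 = 0 then
        (if x.1 ≤ m₀ then 0 else
          Cε (m₀, 0) 1 2 * Cε (m₀, n₀) 2 1 * Cε (0, n₀) 1 3 * Cε (0, 0) 3 0 *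
            lam ^ (-2 * n₀ - x.1))
      else if x.2 = n₀ then
        (if x.1 ≤ 0 then 0 else if x.1 ≤ m₀ then
          Cε (0, n₀) 1 3 * Cε (0, 0) 3 0 * lam ^ (-n₀ - x.1)
        else Cε (m₀, n₀) 1 1 * Cε (0, n₀) 1 3 * Cε (0, 0) 3 0 * lam ^ (-n₀ - x.1))
      else 0,
     if x.1 = 0 then
        (if 0 ≤ x.2 then 0 else Cε (0, 0) 2 0 * lam ^ x.2)
      else if x.1 = m₀ then
        (if n₀ ≤ x.2 then 0 else if 0 ≤ x.2 then
          Cε (m₀, n₀) 2 1 * Cε (0, n₀) 1 3 * Cε (0, 0) 3 0 * lam ^ (x.2 - 2 * n₀ - m₀)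
        else Cε (m₀, 0) 2 2 * Cε (m₀, n₀) 2 1 * Cε (0, n₀) 1 3 * Cε (0, 0) 3 0 *
          lam ^ (x.2 - 2 * n₀ - m₀))
      else 0,
     if x.1 = 0 then
        (if x.2 ≤ 0 then 0 else if x.2 ≤ n₀ then Cε (0, 0) 3 0 * lam ^ (-x.2)
          else Cε (0, n₀) 3 3 * Cε (0, 0) 3 0 * lam ^ (-x.2))
      else if x.1 = m₀ then
        (if x.2 ≤ n₀ then 0
          else Cε (m₀, n₀) 3 1 * Cε (0, n₀) 1 3 * Cε (0, 0) 3 0 * lam ^ (-m₀ - x.2))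
      else 0 ]

set_option maxHeartbeats 2000000 in
private lemma existsPlus (m₀ n₀ : ℤ) (hm : 1 ≤ m₀) (hn : 1 ≤ n₀) (ε : ℝ)
    (Cε : Site → Matrix Chir Chir ℂ) (hCε : IsPerturbedFourCorner m₀ n₀ ε Cε) (κ : ℂ)
    (hEq : Complex.exp (-(Complex.I * κ)) ^ (2 * (m₀ + n₀)).toNat = cPlus m₀ n₀ Cε) :
    ∃ u : Site → Chir → ℂ, u ≠ 0 ∧ IsOutgoing (max m₀ n₀) κ u ∧ IsPtSolution Cε κ u := by
  obtain ⟨hU, hoff, hnear, z1, z2, z3, z4, z5, z6, z7, z8⟩ := hCε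
  set lam := Complex.exp (-(Complex.I * κ)) with hlamdef
  have hlam : lam ≠ 0 := Complex.exp_ne_zero _
  have hz : ∀ s t : ℤ, lam ^ s * lam ^ t = lam ^ (s + t) := fun s t => (zpow_add₀ hlam s t).symm
  have hz1 : ∀ t : ℤ, lam * lam ^ t = lam ^ (t + 1) := fun t => by
    rw [zpow_add_one₀ hlam t]; ring
  have step : ∀ (c : ℂ) (e f : ℤ), e + 1 = f → lam * (c * lam ^ e) = c * lam ^ f := by
    intro c e f hef; rw [← hef, ← hz1 e]; ring
  have merge : ∀ (c : ℂ) (e f : ℤ), e = f + 1 → c * lam ^ e = lam * (c * lam ^ f) := by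
    intro c e f hef; rw [hef, ← hz1 f]; ring
  have merge1 : ∀ (e f : ℤ), e = f + 1 → lam ^ e = lam * lam ^ f := by
    intro e f hef; rw [hef, ← hz1 f]
  have hzc' : ∀ (c : ℂ) (s t : ℤ), c * lam ^ s * lam ^ t = c * lam ^ (s + t) := by
    intro c s t; rw [mul_assoc, hz]
  have zpc : ∀ (c : ℂ) (e f : ℤ), e = f → c * lam ^ e = c * lam ^ f := by
    intro c e f h; rw [h]
  have hexpz : ∀ t : ℤ, Complex.exp (-(Complex.I * κ * (t : ℂ))) = lam ^ t := by
    intro t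
    rw [show -(Complex.I * κ * (t : ℂ)) = (t : ℂ) * -(Complex.I * κ) by ring,
      Complex.exp_int_mul]
  have hexpz2 : ∀ t : ℤ, Complex.exp (Complex.I * κ * (t : ℂ)) = lam ^ (-t) := by
    intro t
    rw [show Complex.I * κ * (t : ℂ) = ((-t : ℤ) : ℂ) * -(Complex.I * κ) by push_cast; ring,
      Complex.exp_int_mul]
  have hEqz : lam ^ (2 * (m₀ + n₀) : ℤ) = cPlus m₀ n₀ Cε := by
    rw [show (2 * (m₀ + n₀) : ℤ) = (((2 * (m₀ + n₀)).toNat : ℕ) : ℤ) by omega, zpow_natCast]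
    exact hEq
  -- corner values
  have c00v0 : upFun m₀ n₀ Cε lam (0, 0) 0 = 1 := by
    simp only [upFun, Matrix.cons_val_zero]
    split_ifs <;> first | omega | simp
  have c00v1 : upFun m₀ n₀ Cε lam (0, 0) 1 = 0 := by
    simp only [upFun, Matrix.cons_val_one, Matrix.cons_val_zero, Matrix.head_cons]
    split_ifs <;> first | omega | rfl
  have c00v2 : upFun m₀ n₀ Cε lam (0, 0) 2 = 0 := by
    simp only [upFun, Matrix.cons_val_two, Matrix.tail_cons, Matrix.head_cons]
    split_ifs <;> first | omega | rfl
  have c00v3 : upFun m₀ n₀ Cε lam (0, 0) 3 = 0 := by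
    simp only [upFun, Matrix.cons_val_three, Matrix.tail_cons, Matrix.head_cons]
    split_ifs <;> first | omega | rfl
  have n00L : upFun m₀ n₀ Cε lam (0 - 1, 0) 0 = Cε (0, 0) 0 0 * lam ^ ((0 : ℤ) - 1) := by
    simp only [upFun, Matrix.cons_val_zero]
    split_ifs <;> first | omega | rfl
  have n00R : upFun m₀ n₀ Cε lam (0 + 1, 0) 1 = 0 := by
    simp only [upFun, Matrix.cons_val_one, Matrix.cons_val_zero, Matrix.head_cons]
    split_ifs <;> first | omega | rfl
  have n00D : upFun m₀ n₀ Cε lam (0, 0 - 1) 2 = Cε (0, 0) 2 0 * lam ^ ((0 : ℤ) - 1) := by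
    simp only [upFun, Matrix.cons_val_two, Matrix.tail_cons, Matrix.head_cons]
    split_ifs <;> first | omega | rfl
  have n00U : upFun m₀ n₀ Cε lam (0, 0 + 1) 3 = Cε (0, 0) 3 0 * lam ^ (-((0 : ℤ) + 1)) := by
    simp only [upFun, Matrix.cons_val_three, Matrix.tail_cons, Matrix.head_cons]
    split_ifs <;> first | omega | rfl
  have cm0v0 : upFun m₀ n₀ Cε lam (m₀, 0) 0 = 0 := by
    simp only [upFun, Matrix.cons_val_zero]
    split_ifs <;> first | omega | rfl
  have cm0v1 : upFun m₀ n₀ Cε lam (m₀, 0) 1 = 0 := by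
    simp only [upFun, Matrix.cons_val_one, Matrix.cons_val_zero, Matrix.head_cons]
    split_ifs <;> first | omega | rfl
  have cm0v2 : upFun m₀ n₀ Cε lam (m₀, 0) 2
      = Cε (m₀, n₀) 2 1 * Cε (0, n₀) 1 3 * Cε (0, 0) 3 0 * lam ^ ((0 : ℤ) - 2 * n₀ - m₀) := by
    simp only [upFun, Matrix.cons_val_two, Matrix.tail_cons, Matrix.head_cons]
    split_ifs <;> first | omega | rfl
  have cm0v3 : upFun m₀ n₀ Cε lam (m₀, 0) 3 = 0 := by
    simp only [upFun, Matrix.cons_val_three, Matrix.tail_cons, Matrix.head_cons]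
    split_ifs <;> first | omega | rfl
  have nm0L : upFun m₀ n₀ Cε lam (m₀ - 1, 0) 0 = lam ^ (m₀ - 1) := by
    simp only [upFun, Matrix.cons_val_zero]
    split_ifs <;> first | omega | rfl
  have nm0R : upFun m₀ n₀ Cε lam (m₀ + 1, 0) 1
      = Cε (m₀, 0) 1 2 * Cε (m₀, n₀) 2 1 * Cε (0, n₀) 1 3 * Cε (0, 0) 3 0 *
        lam ^ (-2 * n₀ - (m₀ + 1)) := by
    simp only [upFun, Matrix.cons_val_one, Matrix.cons_val_zero, Matrix.head_cons]
    split_ifs <;> first | omega | rfl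
  have nm0D : upFun m₀ n₀ Cε lam (m₀, 0 - 1) 2
      = Cε (m₀, 0) 2 2 * Cε (m₀, n₀) 2 1 * Cε (0, n₀) 1 3 * Cε (0, 0) 3 0 *
        lam ^ ((0 : ℤ) - 1 - 2 * n₀ - m₀) := by
    simp only [upFun, Matrix.cons_val_two, Matrix.tail_cons, Matrix.head_cons]
    split_ifs <;> first | omega | rfl
  have nm0U : upFun m₀ n₀ Cε lam (m₀, 0 + 1) 3 = 0 := by
    simp only [upFun, Matrix.cons_val_three, Matrix.tail_cons, Matrix.head_cons]
    split_ifs <;> first | omega | rfl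
  have cmnv0 : upFun m₀ n₀ Cε lam (m₀, n₀) 0 = 0 := by
    simp only [upFun, Matrix.cons_val_zero]
    split_ifs <;> first | omega | rfl
  have cmnv1 : upFun m₀ n₀ Cε lam (m₀, n₀) 1
      = Cε (0, n₀) 1 3 * Cε (0, 0) 3 0 * lam ^ (-n₀ - m₀) := by
    simp only [upFun, Matrix.cons_val_one, Matrix.cons_val_zero, Matrix.head_cons]
    split_ifs <;> first | omega | rfl
  have cmnv2 : upFun m₀ n₀ Cε lam (m₀, n₀) 2 = 0 := by
    simp only [upFun, Matrix.cons_val_two, Matrix.tail_cons, Matrix.head_cons]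
    split_ifs <;> first | omega | rfl
  have cmnv3 : upFun m₀ n₀ Cε lam (m₀, n₀) 3 = 0 := by
    simp only [upFun, Matrix.cons_val_three, Matrix.tail_cons, Matrix.head_cons]
    split_ifs <;> first | omega | rfl
  have nmnL : upFun m₀ n₀ Cε lam (m₀ - 1, n₀) 0 = 0 := by
    simp only [upFun, Matrix.cons_val_zero]
    split_ifs <;> first | omega | rfl
  have nmnR : upFun m₀ n₀ Cε lam (m₀ + 1, n₀) 1
      = Cε (m₀, n₀) 1 1 * Cε (0, n₀) 1 3 * Cε (0, 0) 3 0 * lam ^ (-n₀ - (m₀ + 1)) := by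
    simp only [upFun, Matrix.cons_val_one, Matrix.cons_val_zero, Matrix.head_cons]
    split_ifs <;> first | omega | rfl
  have nmnD : upFun m₀ n₀ Cε lam (m₀, n₀ - 1) 2
      = Cε (m₀, n₀) 2 1 * Cε (0, n₀) 1 3 * Cε (0, 0) 3 0 * lam ^ (n₀ - 1 - 2 * n₀ - m₀) := by
    simp only [upFun, Matrix.cons_val_two, Matrix.tail_cons, Matrix.head_cons]
    split_ifs <;> first | omega | rfl
  have nmnU : upFun m₀ n₀ Cε lam (m₀, n₀ + 1) 3
      = Cε (m₀, n₀) 3 1 * Cε (0, n₀) 1 3 * Cε (0, 0) 3 0 * lam ^ (-m₀ - (n₀ + 1)) := by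
    simp only [upFun, Matrix.cons_val_three, Matrix.tail_cons, Matrix.head_cons]
    split_ifs <;> first | omega | rfl
  have c0nv0 : upFun m₀ n₀ Cε lam (0, n₀) 0 = 0 := by
    simp only [upFun, Matrix.cons_val_zero]
    split_ifs <;> first | omega | rfl
  have c0nv1 : upFun m₀ n₀ Cε lam (0, n₀) 1 = 0 := by
    simp only [upFun, Matrix.cons_val_one, Matrix.cons_val_zero, Matrix.head_cons]
    split_ifs <;> first | omega | rfl
  have c0nv2 : upFun m₀ n₀ Cε lam (0, n₀) 2 = 0 := by
    simp only [upFun, Matrix.cons_val_two, Matrix.tail_cons, Matrix.head_cons]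
    split_ifs <;> first | omega | rfl
  have c0nv3 : upFun m₀ n₀ Cε lam (0, n₀) 3 = Cε (0, 0) 3 0 * lam ^ (-n₀) := by
    simp only [upFun, Matrix.cons_val_three, Matrix.tail_cons, Matrix.head_cons]
    split_ifs <;> first | omega | rfl
  have n0nL : upFun m₀ n₀ Cε lam (0 - 1, n₀) 0
      = Cε (0, n₀) 0 3 * Cε (0, 0) 3 0 * lam ^ ((0 : ℤ) - 1 - n₀) := by
    simp only [upFun, Matrix.cons_val_zero]
    split_ifs <;> first | omega | rfl
  have n0nR : upFun m₀ n₀ Cε lam (0 + 1, n₀) 1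
      = Cε (0, n₀) 1 3 * Cε (0, 0) 3 0 * lam ^ (-n₀ - (0 + 1)) := by
    simp only [upFun, Matrix.cons_val_one, Matrix.cons_val_zero, Matrix.head_cons]
    split_ifs <;> first | omega | rfl
  have n0nD : upFun m₀ n₀ Cε lam (0, n₀ - 1) 2 = 0 := by
    simp only [upFun, Matrix.cons_val_two, Matrix.tail_cons, Matrix.head_cons]
    split_ifs <;> first | omega | rfl
  have n0nU : upFun m₀ n₀ Cε lam (0, n₀ + 1) 3
      = Cε (0, n₀) 3 3 * Cε (0, 0) 3 0 * lam ^ (-(n₀ + 1)) := by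
    simp only [upFun, Matrix.cons_val_three, Matrix.tail_cons, Matrix.head_cons]
    split_ifs <;> first | omega | rfl
  -- free steps away from the corners
  have FS0 : ∀ p q : ℤ, ¬(p = 0 ∧ q = 0) → ¬(p = m₀ ∧ q = 0) → ¬(p = m₀ ∧ q = n₀) →
      ¬(p = 0 ∧ q = n₀) →
      upFun m₀ n₀ Cε lam (p, q) 0 = lam * upFun m₀ n₀ Cε lam (p - 1, q) 0 := by
    intro p q h1 h2 h3 h4
    simp only [upFun, Matrix.cons_val_zero]
    split_ifs <;>
      first
        | omega
        | (exact merge _ _ _ (by omega))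
        | (exact merge1 _ _ (by omega))
        | simp
  have FS1 : ∀ p q : ℤ, ¬(p = 0 ∧ q = 0) → ¬(p = m₀ ∧ q = 0) → ¬(p = m₀ ∧ q = n₀) →
      ¬(p = 0 ∧ q = n₀) →
      upFun m₀ n₀ Cε lam (p, q) 1 = lam * upFun m₀ n₀ Cε lam (p + 1, q) 1 := by
    intro p q h1 h2 h3 h4
    simp only [upFun, Matrix.cons_val_one, Matrix.cons_val_zero, Matrix.head_cons]
    split_ifs <;>
      first
        | omega
        | (exact merge _ _ _ (by omega))
        | (exact merge1 _ _ (by omega))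
        | simp
  have FS2 : ∀ p q : ℤ, ¬(p = 0 ∧ q = 0) → ¬(p = m₀ ∧ q = 0) → ¬(p = m₀ ∧ q = n₀) →
      ¬(p = 0 ∧ q = n₀) →
      upFun m₀ n₀ Cε lam (p, q) 2 = lam * upFun m₀ n₀ Cε lam (p, q - 1) 2 := by
    intro p q h1 h2 h3 h4
    simp only [upFun, Matrix.cons_val_two, Matrix.tail_cons, Matrix.head_cons]
    split_ifs <;>
      first
        | omega
        | (exact merge _ _ _ (by omega))
        | (exact merge1 _ _ (by omega))
        | simp
  have FS3 : ∀ p q : ℤ, ¬(p = 0 ∧ q = 0) → ¬(p = m₀ ∧ q = 0) → ¬(p = m₀ ∧ q = n₀) →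
      ¬(p = 0 ∧ q = n₀) →
      upFun m₀ n₀ Cε lam (p, q) 3 = lam * upFun m₀ n₀ Cε lam (p, q + 1) 3 := by
    intro p q h1 h2 h3 h4
    simp only [upFun, Matrix.cons_val_three, Matrix.tail_cons, Matrix.head_cons]
    split_ifs <;>
      first
        | omega
        | (exact merge _ _ _ (by omega))
        | (exact merge1 _ _ (by omega))
        | simp
  -- the eigenvalue equation
  have main : IsPtSolution Cε κ (upFun m₀ n₀ Cε lam) := by
    rw [isPtSolution_iff']
    intro p q
    by_cases h1 : p = 0 ∧ q = 0
    · obtain ⟨hp, hq⟩ := h1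
      rw [hp, hq]
      refine ⟨?_, ?_, ?_, ?_⟩
      · rw [c00v0, c00v1, c00v2, c00v3, n00L,
          step (Cε (0, 0) 0 0) ((0 : ℤ) - 1) 0 (by ring), zpow_zero]
        ring
      · rw [c00v0, c00v1, c00v2, c00v3, n00R, z1]; ring
      · rw [c00v0, c00v1, c00v2, c00v3, n00D,
          step (Cε (0, 0) 2 0) ((0 : ℤ) - 1) 0 (by ring), zpow_zero]
        ring
      · rw [c00v0, c00v1, c00v2, c00v3, n00U,
          step (Cε (0, 0) 3 0) (-((0 : ℤ) + 1)) 0 (by ring), zpow_zero]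
        ring
    · by_cases h2 : p = m₀ ∧ q = 0
      · obtain ⟨hp, hq⟩ := h2
        rw [hp, hq]
        refine ⟨?_, ?_, ?_, ?_⟩
        · rw [cm0v0, cm0v1, cm0v2, cm0v3, nm0L, hz1 (m₀ - 1)]
          have hEqc : cPlus m₀ n₀ Cε * lam ^ ((0 : ℤ) - 2 * n₀ - m₀) = lam ^ (m₀ - 1 + 1) := by
            rw [← hEqz, hz,
              show (2 * (m₀ + n₀) : ℤ) + ((0 : ℤ) - 2 * n₀ - m₀) = m₀ - 1 + 1 by ring]
          rw [← hEqc]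
          simp only [cPlus]
          ring
        · rw [cm0v0, cm0v1, cm0v2, cm0v3, nm0R,
            step (Cε (m₀, 0) 1 2 * Cε (m₀, n₀) 2 1 * Cε (0, n₀) 1 3 * Cε (0, 0) 3 0)
              (-2 * n₀ - (m₀ + 1)) ((0 : ℤ) - 2 * n₀ - m₀) (by ring)]
          ring
        · rw [cm0v0, cm0v1, cm0v2, cm0v3, nm0D,
            step (Cε (m₀, 0) 2 2 * Cε (m₀, n₀) 2 1 * Cε (0, n₀) 1 3 * Cε (0, 0) 3 0)
              ((0 : ℤ) - 1 - 2 * n₀ - m₀) ((0 : ℤ) - 2 * n₀ - m₀) (by ring)]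
          ring
        · rw [cm0v0, cm0v1, cm0v2, cm0v3, nm0U, z3]; ring
      · by_cases h3 : p = m₀ ∧ q = n₀
        · obtain ⟨hp, hq⟩ := h3
          rw [hp, hq]
          refine ⟨?_, ?_, ?_, ?_⟩
          · rw [cmnv0, cmnv1, cmnv2, cmnv3, nmnL, z6]; ring
          · rw [cmnv0, cmnv1, cmnv2, cmnv3, nmnR,
              step (Cε (m₀, n₀) 1 1 * Cε (0, n₀) 1 3 * Cε (0, 0) 3 0)
                (-n₀ - (m₀ + 1)) (-n₀ - m₀) (by ring)]
            ring
          · rw [cmnv0, cmnv1, cmnv2, cmnv3, nmnD,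
              step (Cε (m₀, n₀) 2 1 * Cε (0, n₀) 1 3 * Cε (0, 0) 3 0)
                (n₀ - 1 - 2 * n₀ - m₀) (-n₀ - m₀) (by ring)]
            ring
          · rw [cmnv0, cmnv1, cmnv2, cmnv3, nmnU,
              step (Cε (m₀, n₀) 3 1 * Cε (0, n₀) 1 3 * Cε (0, 0) 3 0)
                (-m₀ - (n₀ + 1)) (-n₀ - m₀) (by ring)]
            ring
        · by_cases h4 : p = 0 ∧ q = n₀
          · obtain ⟨hp, hq⟩ := h4
            rw [hp, hq]
            refine ⟨?_, ?_, ?_, ?_⟩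
            · rw [c0nv0, c0nv1, c0nv2, c0nv3, n0nL,
                step (Cε (0, n₀) 0 3 * Cε (0, 0) 3 0)
                  ((0 : ℤ) - 1 - n₀) (-n₀) (by ring)]
              ring
            · rw [c0nv0, c0nv1, c0nv2, c0nv3, n0nR,
                step (Cε (0, n₀) 1 3 * Cε (0, 0) 3 0) (-n₀ - (0 + 1)) (-n₀) (by ring)]
              ring
            · rw [c0nv0, c0nv1, c0nv2, c0nv3, n0nD, z8]; ring
            · rw [c0nv0, c0nv1, c0nv2, c0nv3, n0nU,
                step (Cε (0, n₀) 3 3 * Cε (0, 0) 3 0) (-(n₀ + 1)) (-n₀) (by ring)]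
              ring
          · have hC1 : Cε (p, q) = 1 := hoff (p, q) (by rw [mem_corners_iff]; tauto)
            refine ⟨?_, ?_, ?_, ?_⟩
            · rw [hC1]
              simpa [Matrix.one_apply] using FS0 p q h1 h2 h3 h4
            · rw [hC1]
              simpa [Matrix.one_apply] using FS1 p q h1 h2 h3 h4
            · rw [hC1]
              simpa [Matrix.one_apply] using FS2 p q h1 h2 h3 h4
            · rw [hC1]
              simpa [Matrix.one_apply] using FS3 p q h1 h2 h3 h4
  have hMm : m₀ ≤ max m₀ n₀ := le_max_left _ _
  have hMn : n₀ ≤ max m₀ n₀ := le_max_right _ _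
  refine ⟨upFun m₀ n₀ Cε lam, ?_, ?_, main⟩
  · intro h0
    have h1 : upFun m₀ n₀ Cε lam (0, 0) 0 = 1 := c00v0
    rw [h0] at h1
    simp at h1
  · refine ⟨fun y => if y = 0 then Cε (0, 0) 0 0
        else if y = n₀ then Cε (0, n₀) 0 3 * Cε (0, 0) 3 0 * lam ^ (-n₀ : ℤ) else 0,
      fun y => if y = 0 then
          Cε (m₀, 0) 1 2 * Cε (m₀, n₀) 2 1 * Cε (0, n₀) 1 3 * Cε (0, 0) 3 0 *
            lam ^ (-2 * n₀ : ℤ)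
        else if y = n₀ then
          Cε (m₀, n₀) 1 1 * Cε (0, n₀) 1 3 * Cε (0, 0) 3 0 * lam ^ (-n₀ : ℤ) else 0,
      fun y => if y = 0 then Cε (0, 0) 2 0
        else if y = m₀ then
          Cε (m₀, 0) 2 2 * Cε (m₀, n₀) 2 1 * Cε (0, n₀) 1 3 * Cε (0, 0) 3 0 *
            lam ^ (-2 * n₀ - m₀ : ℤ) else 0,
      fun y => if y = 0 then Cε (0, n₀) 3 3 * Cε (0, 0) 3 0
        else if y = m₀ then
          Cε (m₀, n₀) 3 1 * Cε (0, n₀) 1 3 * Cε (0, 0) 3 0 * lam ^ (-m₀ : ℤ) else 0,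
      ?_, ?_, ?_, ?_, ?_, ?_, ?_, ?_⟩
    · intro x hx
      obtain ⟨p, q⟩ := x
      have hx' : p < -(max m₀ n₀) := hx
      simp only [upFun, Matrix.cons_val_zero]
      rw [hexpz p]
      split_ifs <;>
        first
          | omega
          | rfl
          | (rw [hzc' _ _ _]; exact zpc _ _ _ (by omega))
          | simp
    · intro x hx
      obtain ⟨p, q⟩ := x
      have hx' : max m₀ n₀ < p := hx
      simp only [upFun, Matrix.cons_val_zero]
      split_ifs <;> first | omega | rfl
    · intro x hx
      obtain ⟨p, q⟩ := x
      have hx' : p < -(max m₀ n₀) := hx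
      simp only [upFun, Matrix.cons_val_one, Matrix.cons_val_zero, Matrix.head_cons]
      split_ifs <;> first | omega | rfl
    · intro x hx
      obtain ⟨p, q⟩ := x
      have hx' : max m₀ n₀ < p := hx
      simp only [upFun, Matrix.cons_val_one, Matrix.cons_val_zero, Matrix.head_cons]
      rw [hexpz2 p]
      split_ifs <;>
        first
          | omega
          | rfl
          | (rw [hzc' _ _ _]; exact zpc _ _ _ (by omega))
          | simp
    · intro x hx
      obtain ⟨p, q⟩ := x
      have hx' : q < -(max m₀ n₀) := hx
      simp only [upFun, Matrix.cons_val_two, Matrix.tail_cons, Matrix.head_cons]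
      rw [hexpz q]
      split_ifs <;>
        first
          | omega
          | rfl
          | (rw [hzc' _ _ _]; exact zpc _ _ _ (by omega))
          | simp
    · intro x hx
      obtain ⟨p, q⟩ := x
      have hx' : max m₀ n₀ < q := hx
      simp only [upFun, Matrix.cons_val_two, Matrix.tail_cons, Matrix.head_cons]
      split_ifs <;> first | omega | rfl
    · intro x hx
      obtain ⟨p, q⟩ := x
      have hx' : q < -(max m₀ n₀) := hx
      simp only [upFun, Matrix.cons_val_three, Matrix.tail_cons, Matrix.head_cons]
      split_ifs <;> first | omega | rfl
    · intro x hx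
      obtain ⟨p, q⟩ := x
      have hx' : max m₀ n₀ < q := hx
      simp only [upFun, Matrix.cons_val_three, Matrix.tail_cons, Matrix.head_cons]
      rw [hexpz2 q]
      split_ifs <;>
        first
          | omega
          | rfl
          | (rw [hzc' _ _ _]; exact zpc _ _ _ (by omega))
          | simp
private def umFun (m₀ n₀ : ℤ) (Cε : Site → Matrix Chir Chir ℂ) (lam : ℂ) : Site → Chir → ℂ :=
  fun x =>
  ![ if x.2 = 0 then
        (if 0 ≤ x.1 then 0 else Cε (0, 0) 0 2 * lam ^ x.1)
      else if x.2 = n₀ then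
        (if m₀ ≤ x.1 then 0 else if 0 ≤ x.1 then
          Cε (m₀, n₀) 0 3 * Cε (m₀, 0) 3 1 * Cε (0, 0) 1 2 * lam ^ (x.1 - 2 * m₀ - n₀)
        else Cε (0, n₀) 0 0 * Cε (m₀, n₀) 0 3 * Cε (m₀, 0) 3 1 * Cε (0, 0) 1 2 *
          lam ^ (x.1 - 2 * m₀ - n₀))
      else 0,
     if x.2 = 0 then
        (if x.1 ≤ 0 then 0 else if x.1 ≤ m₀ then Cε (0, 0) 1 2 * lam ^ (-x.1)
          else Cε (m₀, 0) 1 1 * Cε (0, 0) 1 2 * lam ^ (-x.1))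
      else if x.2 = n₀ then
        (if x.1 ≤ m₀ then 0
          else Cε (m₀, n₀) 1 3 * Cε (m₀, 0) 3 1 * Cε (0, 0) 1 2 * lam ^ (-n₀ - x.1))
      else 0,
     if x.1 = 0 then
        (if n₀ ≤ x.2 then 0 else if 0 ≤ x.2 then lam ^ x.2 else Cε (0, 0) 2 2 * lam ^ x.2)
      else if x.1 = m₀ then
        (if 0 ≤ x.2 then 0 else Cε (m₀, 0) 2 1 * Cε (0, 0) 1 2 * lam ^ (x.2 - m₀))
      else 0,
     if x.1 = 0 then
        (if x.2 ≤ n₀ then 0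
          else Cε (0, n₀) 3 0 * Cε (m₀, n₀) 0 3 * Cε (m₀, 0) 3 1 * Cε (0, 0) 1 2 *
            lam ^ (-2 * m₀ - x.2))
      else if x.1 = m₀ then
        (if x.2 ≤ 0 then 0 else if x.2 ≤ n₀ then
          Cε (m₀, 0) 3 1 * Cε (0, 0) 1 2 * lam ^ (-m₀ - x.2)
        else Cε (m₀, n₀) 3 3 * Cε (m₀, 0) 3 1 * Cε (0, 0) 1 2 * lam ^ (-m₀ - x.2))
      else 0 ]

set_option maxHeartbeats 2000000 in
private lemma existsMinus (m₀ n₀ : ℤ) (hm : 1 ≤ m₀) (hn : 1 ≤ n₀) (ε : ℝ)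
    (Cε : Site → Matrix Chir Chir ℂ) (hCε : IsPerturbedFourCorner m₀ n₀ ε Cε) (κ : ℂ)
    (hEq : Complex.exp (-(Complex.I * κ)) ^ (2 * (m₀ + n₀)).toNat = cMinus m₀ n₀ Cε) :
    ∃ u : Site → Chir → ℂ, u ≠ 0 ∧ IsOutgoing (max m₀ n₀) κ u ∧ IsPtSolution Cε κ u := by
  obtain ⟨hU, hoff, hnear, z1, z2, z3, z4, z5, z6, z7, z8⟩ := hCε
  set lam := Complex.exp (-(Complex.I * κ)) with hlamdef
  have hlam : lam ≠ 0 := Complex.exp_ne_zero _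
  have hz : ∀ s t : ℤ, lam ^ s * lam ^ t = lam ^ (s + t) := fun s t => (zpow_add₀ hlam s t).symm
  have hz1 : ∀ t : ℤ, lam * lam ^ t = lam ^ (t + 1) := fun t => by
    rw [zpow_add_one₀ hlam t]; ring
  have step : ∀ (c : ℂ) (e f : ℤ), e + 1 = f → lam * (c * lam ^ e) = c * lam ^ f := by
    intro c e f hef; rw [← hef, ← hz1 e]; ring
  have merge : ∀ (c : ℂ) (e f : ℤ), e = f + 1 → c * lam ^ e = lam * (c * lam ^ f) := by
    intro c e f hef; rw [hef, ← hz1 f]; ring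
  have merge1 : ∀ (e f : ℤ), e = f + 1 → lam ^ e = lam * lam ^ f := by
    intro e f hef; rw [hef, ← hz1 f]
  have hzc' : ∀ (c : ℂ) (s t : ℤ), c * lam ^ s * lam ^ t = c * lam ^ (s + t) := by
    intro c s t; rw [mul_assoc, hz]
  have zpc : ∀ (c : ℂ) (e f : ℤ), e = f → c * lam ^ e = c * lam ^ f := by
    intro c e f h; rw [h]
  have hexpz : ∀ t : ℤ, Complex.exp (-(Complex.I * κ * (t : ℂ))) = lam ^ t := by
    intro t
    rw [show -(Complex.I * κ * (t : ℂ)) = (t : ℂ) * -(Complex.I * κ) by ring,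
      Complex.exp_int_mul]
  have hexpz2 : ∀ t : ℤ, Complex.exp (Complex.I * κ * (t : ℂ)) = lam ^ (-t) := by
    intro t
    rw [show Complex.I * κ * (t : ℂ) = ((-t : ℤ) : ℂ) * -(Complex.I * κ) by push_cast; ring,
      Complex.exp_int_mul]
  have hEqz : lam ^ (2 * (m₀ + n₀) : ℤ) = cMinus m₀ n₀ Cε := by
    rw [show (2 * (m₀ + n₀) : ℤ) = (((2 * (m₀ + n₀)).toNat : ℕ) : ℤ) by omega, zpow_natCast]
    exact hEq
  -- corner values
  have c00v0 : umFun m₀ n₀ Cε lam (0, 0) 0 = 0 := by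
    simp only [umFun, Matrix.cons_val_zero]
    split_ifs <;> first | omega | rfl
  have c00v1 : umFun m₀ n₀ Cε lam (0, 0) 1 = 0 := by
    simp only [umFun, Matrix.cons_val_one, Matrix.cons_val_zero, Matrix.head_cons]
    split_ifs <;> first | omega | rfl
  have c00v2 : umFun m₀ n₀ Cε lam (0, 0) 2 = 1 := by
    simp only [umFun, Matrix.cons_val_two, Matrix.tail_cons, Matrix.head_cons]
    split_ifs <;> first | omega | simp
  have c00v3 : umFun m₀ n₀ Cε lam (0, 0) 3 = 0 := by
    simp only [umFun, Matrix.cons_val_three, Matrix.tail_cons, Matrix.head_cons]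
    split_ifs <;> first | omega | rfl
  have n00L : umFun m₀ n₀ Cε lam (0 - 1, 0) 0 = Cε (0, 0) 0 2 * lam ^ ((0 : ℤ) - 1) := by
    simp only [umFun, Matrix.cons_val_zero]
    split_ifs <;> first | omega | rfl
  have n00R : umFun m₀ n₀ Cε lam (0 + 1, 0) 1 = Cε (0, 0) 1 2 * lam ^ (-((0 : ℤ) + 1)) := by
    simp only [umFun, Matrix.cons_val_one, Matrix.cons_val_zero, Matrix.head_cons]
    split_ifs <;> first | omega | rfl
  have n00D : umFun m₀ n₀ Cε lam (0, 0 - 1) 2 = Cε (0, 0) 2 2 * lam ^ ((0 : ℤ) - 1) := by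
    simp only [umFun, Matrix.cons_val_two, Matrix.tail_cons, Matrix.head_cons]
    split_ifs <;> first | omega | rfl
  have n00U : umFun m₀ n₀ Cε lam (0, 0 + 1) 3 = 0 := by
    simp only [umFun, Matrix.cons_val_three, Matrix.tail_cons, Matrix.head_cons]
    split_ifs <;> first | omega | rfl
  have cm0v0 : umFun m₀ n₀ Cε lam (m₀, 0) 0 = 0 := by
    simp only [umFun, Matrix.cons_val_zero]
    split_ifs <;> first | omega | rfl
  have cm0v1 : umFun m₀ n₀ Cε lam (m₀, 0) 1 = Cε (0, 0) 1 2 * lam ^ (-m₀) := by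
    simp only [umFun, Matrix.cons_val_one, Matrix.cons_val_zero, Matrix.head_cons]
    split_ifs <;> first | omega | rfl
  have cm0v2 : umFun m₀ n₀ Cε lam (m₀, 0) 2 = 0 := by
    simp only [umFun, Matrix.cons_val_two, Matrix.tail_cons, Matrix.head_cons]
    split_ifs <;> first | omega | rfl
  have cm0v3 : umFun m₀ n₀ Cε lam (m₀, 0) 3 = 0 := by
    simp only [umFun, Matrix.cons_val_three, Matrix.tail_cons, Matrix.head_cons]
    split_ifs <;> first | omega | rfl
  have nm0L : umFun m₀ n₀ Cε lam (m₀ - 1, 0) 0 = 0 := by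
    simp only [umFun, Matrix.cons_val_zero]
    split_ifs <;> first | omega | rfl
  have nm0R : umFun m₀ n₀ Cε lam (m₀ + 1, 0) 1
      = Cε (m₀, 0) 1 1 * Cε (0, 0) 1 2 * lam ^ (-(m₀ + 1)) := by
    simp only [umFun, Matrix.cons_val_one, Matrix.cons_val_zero, Matrix.head_cons]
    split_ifs <;> first | omega | rfl
  have nm0D : umFun m₀ n₀ Cε lam (m₀, 0 - 1) 2
      = Cε (m₀, 0) 2 1 * Cε (0, 0) 1 2 * lam ^ ((0 : ℤ) - 1 - m₀) := by
    simp only [umFun, Matrix.cons_val_two, Matrix.tail_cons, Matrix.head_cons]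
    split_ifs <;> first | omega | rfl
  have nm0U : umFun m₀ n₀ Cε lam (m₀, 0 + 1) 3
      = Cε (m₀, 0) 3 1 * Cε (0, 0) 1 2 * lam ^ (-m₀ - (0 + 1)) := by
    simp only [umFun, Matrix.cons_val_three, Matrix.tail_cons, Matrix.head_cons]
    split_ifs <;> first | omega | rfl
  have cmnv0 : umFun m₀ n₀ Cε lam (m₀, n₀) 0 = 0 := by
    simp only [umFun, Matrix.cons_val_zero]
    split_ifs <;> first | omega | rfl
  have cmnv1 : umFun m₀ n₀ Cε lam (m₀, n₀) 1 = 0 := by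
    simp only [umFun, Matrix.cons_val_one, Matrix.cons_val_zero, Matrix.head_cons]
    split_ifs <;> first | omega | rfl
  have cmnv2 : umFun m₀ n₀ Cε lam (m₀, n₀) 2 = 0 := by
    simp only [umFun, Matrix.cons_val_two, Matrix.tail_cons, Matrix.head_cons]
    split_ifs <;> first | omega | rfl
  have cmnv3 : umFun m₀ n₀ Cε lam (m₀, n₀) 3
      = Cε (m₀, 0) 3 1 * Cε (0, 0) 1 2 * lam ^ (-m₀ - n₀) := by
    simp only [umFun, Matrix.cons_val_three, Matrix.tail_cons, Matrix.head_cons]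
    split_ifs <;> first | omega | rfl
  have nmnL : umFun m₀ n₀ Cε lam (m₀ - 1, n₀) 0
      = Cε (m₀, n₀) 0 3 * Cε (m₀, 0) 3 1 * Cε (0, 0) 1 2 * lam ^ (m₀ - 1 - 2 * m₀ - n₀) := by
    simp only [umFun, Matrix.cons_val_zero]
    split_ifs <;> first | omega | rfl
  have nmnR : umFun m₀ n₀ Cε lam (m₀ + 1, n₀) 1
      = Cε (m₀, n₀) 1 3 * Cε (m₀, 0) 3 1 * Cε (0, 0) 1 2 * lam ^ (-n₀ - (m₀ + 1)) := by
    simp only [umFun, Matrix.cons_val_one, Matrix.cons_val_zero, Matrix.head_cons]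
    split_ifs <;> first | omega | rfl
  have nmnD : umFun m₀ n₀ Cε lam (m₀, n₀ - 1) 2 = 0 := by
    simp only [umFun, Matrix.cons_val_two, Matrix.tail_cons, Matrix.head_cons]
    split_ifs <;> first | omega | rfl
  have nmnU : umFun m₀ n₀ Cε lam (m₀, n₀ + 1) 3
      = Cε (m₀, n₀) 3 3 * Cε (m₀, 0) 3 1 * Cε (0, 0) 1 2 * lam ^ (-m₀ - (n₀ + 1)) := by
    simp only [umFun, Matrix.cons_val_three, Matrix.tail_cons, Matrix.head_cons]
    split_ifs <;> first | omega | rfl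
  have c0nv0 : umFun m₀ n₀ Cε lam (0, n₀) 0
      = Cε (m₀, n₀) 0 3 * Cε (m₀, 0) 3 1 * Cε (0, 0) 1 2 * lam ^ ((0 : ℤ) - 2 * m₀ - n₀) := by
    simp only [umFun, Matrix.cons_val_zero]
    split_ifs <;> first | omega | rfl
  have c0nv1 : umFun m₀ n₀ Cε lam (0, n₀) 1 = 0 := by
    simp only [umFun, Matrix.cons_val_one, Matrix.cons_val_zero, Matrix.head_cons]
    split_ifs <;> first | omega | rfl
  have c0nv2 : umFun m₀ n₀ Cε lam (0, n₀) 2 = 0 := by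
    simp only [umFun, Matrix.cons_val_two, Matrix.tail_cons, Matrix.head_cons]
    split_ifs <;> first | omega | rfl
  have c0nv3 : umFun m₀ n₀ Cε lam (0, n₀) 3 = 0 := by
    simp only [umFun, Matrix.cons_val_three, Matrix.tail_cons, Matrix.head_cons]
    split_ifs <;> first | omega | rfl
  have n0nL : umFun m₀ n₀ Cε lam (0 - 1, n₀) 0
      = Cε (0, n₀) 0 0 * Cε (m₀, n₀) 0 3 * Cε (m₀, 0) 3 1 * Cε (0, 0) 1 2 *
        lam ^ ((0 : ℤ) - 1 - 2 * m₀ - n₀) := by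
    simp only [umFun, Matrix.cons_val_zero]
    split_ifs <;> first | omega | rfl
  have n0nR : umFun m₀ n₀ Cε lam (0 + 1, n₀) 1 = 0 := by
    simp only [umFun, Matrix.cons_val_one, Matrix.cons_val_zero, Matrix.head_cons]
    split_ifs <;> first | omega | rfl
  have n0nD : umFun m₀ n₀ Cε lam (0, n₀ - 1) 2 = lam ^ (n₀ - 1) := by
    simp only [umFun, Matrix.cons_val_two, Matrix.tail_cons, Matrix.head_cons]
    split_ifs <;> first | omega | rfl
  have n0nU : umFun m₀ n₀ Cε lam (0, n₀ + 1) 3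
      = Cε (0, n₀) 3 0 * Cε (m₀, n₀) 0 3 * Cε (m₀, 0) 3 1 * Cε (0, 0) 1 2 *
        lam ^ (-2 * m₀ - (n₀ + 1)) := by
    simp only [umFun, Matrix.cons_val_three, Matrix.tail_cons, Matrix.head_cons]
    split_ifs <;> first | omega | rfl
  -- free steps away from the corners
  have FS0 : ∀ p q : ℤ, ¬(p = 0 ∧ q = 0) → ¬(p = m₀ ∧ q = 0) → ¬(p = m₀ ∧ q = n₀) →
      ¬(p = 0 ∧ q = n₀) →
      umFun m₀ n₀ Cε lam (p, q) 0 = lam * umFun m₀ n₀ Cε lam (p - 1, q) 0 := by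
    intro p q h1 h2 h3 h4
    simp only [umFun, Matrix.cons_val_zero]
    split_ifs <;>
      first
        | omega
        | (exact merge _ _ _ (by omega))
        | (exact merge1 _ _ (by omega))
        | simp
  have FS1 : ∀ p q : ℤ, ¬(p = 0 ∧ q = 0) → ¬(p = m₀ ∧ q = 0) → ¬(p = m₀ ∧ q = n₀) →
      ¬(p = 0 ∧ q = n₀) →
      umFun m₀ n₀ Cε lam (p, q) 1 = lam * umFun m₀ n₀ Cε lam (p + 1, q) 1 := by
    intro p q h1 h2 h3 h4
    simp only [umFun, Matrix.cons_val_one, Matrix.cons_val_zero, Matrix.head_cons]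
    split_ifs <;>
      first
        | omega
        | (exact merge _ _ _ (by omega))
        | (exact merge1 _ _ (by omega))
        | simp
  have FS2 : ∀ p q : ℤ, ¬(p = 0 ∧ q = 0) → ¬(p = m₀ ∧ q = 0) → ¬(p = m₀ ∧ q = n₀) →
      ¬(p = 0 ∧ q = n₀) →
      umFun m₀ n₀ Cε lam (p, q) 2 = lam * umFun m₀ n₀ Cε lam (p, q - 1) 2 := by
    intro p q h1 h2 h3 h4
    simp only [umFun, Matrix.cons_val_two, Matrix.tail_cons, Matrix.head_cons]
    split_ifs <;>
      first
        | omega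
        | (exact merge _ _ _ (by omega))
        | (exact merge1 _ _ (by omega))
        | simp
  have FS3 : ∀ p q : ℤ, ¬(p = 0 ∧ q = 0) → ¬(p = m₀ ∧ q = 0) → ¬(p = m₀ ∧ q = n₀) →
      ¬(p = 0 ∧ q = n₀) →
      umFun m₀ n₀ Cε lam (p, q) 3 = lam * umFun m₀ n₀ Cε lam (p, q + 1) 3 := by
    intro p q h1 h2 h3 h4
    simp only [umFun, Matrix.cons_val_three, Matrix.tail_cons, Matrix.head_cons]
    split_ifs <;>
      first
        | omega
        | (exact merge _ _ _ (by omega))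
        | (exact merge1 _ _ (by omega))
        | simp
  -- the eigenvalue equation
  have main : IsPtSolution Cε κ (umFun m₀ n₀ Cε lam) := by
    rw [isPtSolution_iff']
    intro p q
    by_cases h1 : p = 0 ∧ q = 0
    · obtain ⟨hp, hq⟩ := h1
      rw [hp, hq]
      refine ⟨?_, ?_, ?_, ?_⟩
      · rw [c00v0, c00v1, c00v2, c00v3, n00L,
          step (Cε (0, 0) 0 2) ((0 : ℤ) - 1) 0 (by ring), zpow_zero]
        ring
      · rw [c00v0, c00v1, c00v2, c00v3, n00R,
          step (Cε (0, 0) 1 2) (-((0 : ℤ) + 1)) 0 (by ring), zpow_zero]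
        ring
      · rw [c00v0, c00v1, c00v2, c00v3, n00D,
          step (Cε (0, 0) 2 2) ((0 : ℤ) - 1) 0 (by ring), zpow_zero]
        ring
      · rw [c00v0, c00v1, c00v2, c00v3, n00U, z2]; ring
    · by_cases h2 : p = m₀ ∧ q = 0
      · obtain ⟨hp, hq⟩ := h2
        rw [hp, hq]
        refine ⟨?_, ?_, ?_, ?_⟩
        · rw [cm0v0, cm0v1, cm0v2, cm0v3, nm0L, z4]; ring
        · rw [cm0v0, cm0v1, cm0v2, cm0v3, nm0R,
            step (Cε (m₀, 0) 1 1 * Cε (0, 0) 1 2) (-(m₀ + 1)) (-m₀) (by ring)]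
          ring
        · rw [cm0v0, cm0v1, cm0v2, cm0v3, nm0D,
            step (Cε (m₀, 0) 2 1 * Cε (0, 0) 1 2) ((0 : ℤ) - 1 - m₀) (-m₀) (by ring)]
          ring
        · rw [cm0v0, cm0v1, cm0v2, cm0v3, nm0U,
            step (Cε (m₀, 0) 3 1 * Cε (0, 0) 1 2) (-m₀ - (0 + 1)) (-m₀) (by ring)]
          ring
      · by_cases h3 : p = m₀ ∧ q = n₀
        · obtain ⟨hp, hq⟩ := h3
          rw [hp, hq]
          refine ⟨?_, ?_, ?_, ?_⟩
          · rw [cmnv0, cmnv1, cmnv2, cmnv3, nmnL,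
              step (Cε (m₀, n₀) 0 3 * Cε (m₀, 0) 3 1 * Cε (0, 0) 1 2)
                (m₀ - 1 - 2 * m₀ - n₀) (-m₀ - n₀) (by ring)]
            ring
          · rw [cmnv0, cmnv1, cmnv2, cmnv3, nmnR,
              step (Cε (m₀, n₀) 1 3 * Cε (m₀, 0) 3 1 * Cε (0, 0) 1 2)
                (-n₀ - (m₀ + 1)) (-m₀ - n₀) (by ring)]
            ring
          · rw [cmnv0, cmnv1, cmnv2, cmnv3, nmnD, z5]; ring
          · rw [cmnv0, cmnv1, cmnv2, cmnv3, nmnU,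
              step (Cε (m₀, n₀) 3 3 * Cε (m₀, 0) 3 1 * Cε (0, 0) 1 2)
                (-m₀ - (n₀ + 1)) (-m₀ - n₀) (by ring)]
            ring
        · by_cases h4 : p = 0 ∧ q = n₀
          · obtain ⟨hp, hq⟩ := h4
            rw [hp, hq]
            refine ⟨?_, ?_, ?_, ?_⟩
            · rw [c0nv0, c0nv1, c0nv2, c0nv3, n0nL,
                step (Cε (0, n₀) 0 0 * Cε (m₀, n₀) 0 3 * Cε (m₀, 0) 3 1 * Cε (0, 0) 1 2)
                  ((0 : ℤ) - 1 - 2 * m₀ - n₀) ((0 : ℤ) - 2 * m₀ - n₀) (by ring)]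
              ring
            · rw [c0nv0, c0nv1, c0nv2, c0nv3, n0nR, z7]; ring
            · rw [c0nv0, c0nv1, c0nv2, c0nv3, n0nD, hz1 (n₀ - 1)]
              have hEqc : cMinus m₀ n₀ Cε * lam ^ ((0 : ℤ) - 2 * m₀ - n₀)
                  = lam ^ (n₀ - 1 + 1) := by
                rw [← hEqz, hz,
                  show (2 * (m₀ + n₀) : ℤ) + ((0 : ℤ) - 2 * m₀ - n₀) = n₀ - 1 + 1 by ring]
              rw [← hEqc]
              simp only [cMinus]
              ring
            · rw [c0nv0, c0nv1, c0nv2, c0nv3, n0nU,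
                step (Cε (0, n₀) 3 0 * Cε (m₀, n₀) 0 3 * Cε (m₀, 0) 3 1 * Cε (0, 0) 1 2)
                  (-2 * m₀ - (n₀ + 1)) ((0 : ℤ) - 2 * m₀ - n₀) (by ring)]
              ring
          · have hC1 : Cε (p, q) = 1 := hoff (p, q) (by rw [mem_corners_iff]; tauto)
            refine ⟨?_, ?_, ?_, ?_⟩
            · rw [hC1]
              simpa [Matrix.one_apply] using FS0 p q h1 h2 h3 h4
            · rw [hC1]
              simpa [Matrix.one_apply] using FS1 p q h1 h2 h3 h4
            · rw [hC1]
              simpa [Matrix.one_apply] using FS2 p q h1 h2 h3 h4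
            · rw [hC1]
              simpa [Matrix.one_apply] using FS3 p q h1 h2 h3 h4
  have hMm : m₀ ≤ max m₀ n₀ := le_max_left _ _
  have hMn : n₀ ≤ max m₀ n₀ := le_max_right _ _
  refine ⟨umFun m₀ n₀ Cε lam, ?_, ?_, main⟩
  · intro h0
    have h1 : umFun m₀ n₀ Cε lam (0, 0) 2 = 1 := c00v2
    rw [h0] at h1
    simp at h1
  · refine ⟨fun y => if y = 0 then Cε (0, 0) 0 2
        else if y = n₀ then
          Cε (0, n₀) 0 0 * Cε (m₀, n₀) 0 3 * Cε (m₀, 0) 3 1 * Cε (0, 0) 1 2 *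
            lam ^ (-2 * m₀ - n₀ : ℤ) else 0,
      fun y => if y = 0 then Cε (m₀, 0) 1 1 * Cε (0, 0) 1 2
        else if y = n₀ then
          Cε (m₀, n₀) 1 3 * Cε (m₀, 0) 3 1 * Cε (0, 0) 1 2 * lam ^ (-n₀ : ℤ) else 0,
      fun y => if y = 0 then Cε (0, 0) 2 2
        else if y = m₀ then Cε (m₀, 0) 2 1 * Cε (0, 0) 1 2 * lam ^ (-m₀ : ℤ) else 0,
      fun y => if y = 0 then
          Cε (0, n₀) 3 0 * Cε (m₀, n₀) 0 3 * Cε (m₀, 0) 3 1 * Cε (0, 0) 1 2 *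
            lam ^ (-2 * m₀ : ℤ)
        else if y = m₀ then
          Cε (m₀, n₀) 3 3 * Cε (m₀, 0) 3 1 * Cε (0, 0) 1 2 * lam ^ (-m₀ : ℤ) else 0,
      ?_, ?_, ?_, ?_, ?_, ?_, ?_, ?_⟩
    · intro x hx
      obtain ⟨p, q⟩ := x
      have hx' : p < -(max m₀ n₀) := hx
      simp only [umFun, Matrix.cons_val_zero]
      rw [hexpz p]
      split_ifs <;>
        first
          | omega
          | rfl
          | (rw [hzc' _ _ _]; exact zpc _ _ _ (by omega))
          | simp
    · intro x hx
      obtain ⟨p, q⟩ := x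
      have hx' : max m₀ n₀ < p := hx
      simp only [umFun, Matrix.cons_val_zero]
      split_ifs <;> first | omega | rfl
    · intro x hx
      obtain ⟨p, q⟩ := x
      have hx' : p < -(max m₀ n₀) := hx
      simp only [umFun, Matrix.cons_val_one, Matrix.cons_val_zero, Matrix.head_cons]
      split_ifs <;> first | omega | rfl
    · intro x hx
      obtain ⟨p, q⟩ := x
      have hx' : max m₀ n₀ < p := hx
      simp only [umFun, Matrix.cons_val_one, Matrix.cons_val_zero, Matrix.head_cons]
      rw [hexpz2 p]
      split_ifs <;>
        first
          | omega
          | rfl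
          | (rw [hzc' _ _ _]; exact zpc _ _ _ (by omega))
          | simp
    · intro x hx
      obtain ⟨p, q⟩ := x
      have hx' : q < -(max m₀ n₀) := hx
      simp only [umFun, Matrix.cons_val_two, Matrix.tail_cons, Matrix.head_cons]
      rw [hexpz q]
      split_ifs <;>
        first
          | omega
          | rfl
          | (rw [hzc' _ _ _]; exact zpc _ _ _ (by omega))
          | simp
    · intro x hx
      obtain ⟨p, q⟩ := x
      have hx' : max m₀ n₀ < q := hx
      simp only [umFun, Matrix.cons_val_two, Matrix.tail_cons, Matrix.head_cons]
      split_ifs <;> first | omega | rfl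
    · intro x hx
      obtain ⟨p, q⟩ := x
      have hx' : q < -(max m₀ n₀) := hx
      simp only [umFun, Matrix.cons_val_three, Matrix.tail_cons, Matrix.head_cons]
      split_ifs <;> first | omega | rfl
    · intro x hx
      obtain ⟨p, q⟩ := x
      have hx' : max m₀ n₀ < q := hx
      simp only [umFun, Matrix.cons_val_three, Matrix.tail_cons, Matrix.head_cons]
      rw [hexpz2 q]
      split_ifs <;>
        first
          | omega
          | rfl
          | (rw [hzc' _ _ _]; exact zpc _ _ _ (by omega))
          | simp
open Polynomial in
private lemma count_pow (n : ℕ) (hn : n ≠ 0) (c : ℂ) (hc : c ≠ 0) :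
    Set.ncard {z : ℂ | z ^ n = c} = n := by
  classical
  have hsep : (X ^ n - C c).Separable :=
    separable_X_pow_sub_C c (Nat.cast_ne_zero.mpr hn) hc
  have hsp : Splits ((X ^ n - C c).map (algebraMap ℂ ℂ)) := IsAlgClosed.splits _
  have hne : (X ^ n - C c) ≠ 0 := by
    intro h
    have h2 := natDegree_X_pow_sub_C (n := n) (r := c)
    rw [h] at h2
    simp at h2
    omega
  have hset : {z : ℂ | z ^ n = c} = (X ^ n - C c).rootSet ℂ := by
    ext z
    simp [Polynomial.mem_rootSet, hne, sub_eq_zero]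
  rw [hset]
  have hcard := Polynomial.card_rootSet_eq_natDegree hsep hsp
  rw [← Nat.card_coe_set_eq, Nat.card_eq_fintype_card]
  rw [natDegree_X_pow_sub_C] at hcard
  convert hcard

private lemma entryAbsLe (A : Matrix Chir Chir ℂ) (hA : A ∈ Matrix.unitaryGroup Chir ℂ)
    (i j : Chir) : ‖A i j‖ ≤ 1 := by
  have h1 : star A * A = 1 := Matrix.mem_unitaryGroup_iff'.mp hA
  have h2 : (star A * A) j j = (1 : Matrix Chir Chir ℂ) j j := by rw [h1]
  rw [Matrix.mul_apply, Matrix.one_apply_eq] at h2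
  simp only [Matrix.star_apply, Complex.star_def, ← Complex.normSq_eq_conj_mul_self] at h2
  have h5 : ∑ k : Chir, Complex.normSq (A k j) = 1 := by exact_mod_cast h2
  have h6 : Complex.normSq (A i j) ≤ 1 := by
    rw [← h5]
    exact Finset.single_le_sum (f := fun k => Complex.normSq (A k j))
      (fun k _ => Complex.normSq_nonneg _) (Finset.mem_univ i)
  calc ‖A i j‖ = Real.sqrt (Complex.normSq (A i j)) := Complex.norm_def _
    _ ≤ Real.sqrt 1 := Real.sqrt_le_sqrt h6
    _ = 1 := Real.sqrt_one

private lemma prod4_le_one {a b c d : ℝ} (ha0 : 0 ≤ a) (ha : a ≤ 1) (hb0 : 0 ≤ b) (hb : b ≤ 1)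
    (hc0 : 0 ≤ c) (hc : c ≤ 1) (hd0 : 0 ≤ d) (hd : d ≤ 1) : a * b * c * d ≤ 1 := by
  have h1 : a * b ≤ 1 := by nlinarith
  have h1' : (0 : ℝ) ≤ a * b := mul_nonneg ha0 hb0
  have h2 : a * b * c ≤ 1 := by nlinarith
  have h2' : (0 : ℝ) ≤ a * b * c := mul_nonneg h1' hc0
  nlinarith
end Aux15
/-- outgoing solutions of a perturbed four-corner quantum walk exist exactly when
`e^{−2i(m₀+n₀)κ} ∈ {c_ε⁺, c_ε⁻}`; outgoing solutions vanishing along `Φ₊` and `Φ₋` vanish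
identically; each of `c_ε⁺`, `c_ε⁻` contributes exactly `2(m₀+n₀)` values of `κ` mod `2π`. -/
theorem fourCorner_perturbed_eigenvalue_resonance_count
    (m₀ n₀ : ℤ) (hm : 1 ≤ m₀) (hn : 1 ≤ n₀)
    (ε : ℝ) (hε0 : 0 < ε) (hε1 : ε ≤ 1)
    (Cε : Site → Matrix Chir Chir ℂ) (hCε : IsPerturbedFourCorner m₀ n₀ ε Cε)
    (S Cop : H →L[ℂ] H) (hS : IsShiftOp S) (hCop : IsCoinOp Cop Cε)
    (hUnit : S.comp Cop ∈ unitary (H →L[ℂ] H)) :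
    (∀ κ : ℂ, κ.im ≤ 0 →
      ((∃ u : Site → Chir → ℂ, u ≠ 0 ∧ IsOutgoing (max m₀ n₀) κ u ∧ IsPtSolution Cε κ u) ↔
        (Complex.exp (-(2 * ((m₀ : ℂ) + (n₀ : ℂ)) * Complex.I * κ)) = cPlus m₀ n₀ Cε ∨
         Complex.exp (-(2 * ((m₀ : ℂ) + (n₀ : ℂ)) * Complex.I * κ)) = cMinus m₀ n₀ Cε))) ∧
    (∀ κ : ℂ, κ.im ≤ 0 → ∀ u : Site → Chir → ℂ,
      IsOutgoing (max m₀ n₀) κ u → IsPtSolution Cε κ u →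
      (∀ w ∈ imPhiPlus m₀ n₀ ∪ imPhiMinus m₀ n₀, u w.1 w.2 = 0) →
      ∀ (x : Site) (i : Chir), u x i = 0) ∧
    Set.ncard {z : ℂ | ∃ κ : ℂ, κ.im ≤ 0 ∧ z = Complex.exp (-(Complex.I * κ)) ∧
        Complex.exp (-(2 * ((m₀ : ℂ) + (n₀ : ℂ)) * Complex.I * κ)) = cPlus m₀ n₀ Cε}
      = (2 * (m₀ + n₀)).toNat ∧
    Set.ncard {z : ℂ | ∃ κ : ℂ, κ.im ≤ 0 ∧ z = Complex.exp (-(Complex.I * κ)) ∧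
        Complex.exp (-(2 * ((m₀ : ℂ) + (n₀ : ℂ)) * Complex.I * κ)) = cMinus m₀ n₀ Cε}
      = (2 * (m₀ + n₀)).toNat := by

  have hCor1 : ((0 : ℤ), (0 : ℤ)) ∈ corners m₀ n₀ := by rw [mem_corners_iff]; tauto
  have hCor2 : ((m₀ : ℤ), (0 : ℤ)) ∈ corners m₀ n₀ := by rw [mem_corners_iff]; tauto
  have hCor3 : ((m₀ : ℤ), (n₀ : ℤ)) ∈ corners m₀ n₀ := by rw [mem_corners_iff]; tauto
  have hCor4 : ((0 : ℤ), (n₀ : ℤ)) ∈ corners m₀ n₀ := by rw [mem_corners_iff]; tauto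
  have key_ne : ∀ (x : Site) (i j : Chir), x ∈ corners m₀ n₀ →
      fourCornerCoin m₀ n₀ x i j = 1 → Cε x i j ≠ 0 := by
    intro x i j hx h1 h0
    have h2 := hCε.2.2.1 x hx i j
    rw [h0, h1] at h2
    norm_num at h2
    linarith
  have hf1 : fourCornerCoin m₀ n₀ ((0 : ℤ), (0 : ℤ)) 3 0 = 1 := by
    unfold fourCornerCoin
    rw [if_pos rfl]
    simp
  have hf2 : fourCornerCoin m₀ n₀ ((m₀ : ℤ), (0 : ℤ)) 0 2 = 1 := by
    unfold fourCornerCoin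
    rw [if_neg (by intro h; rw [Prod.mk.injEq] at h; omega), if_pos rfl]
    simp
  have hf3 : fourCornerCoin m₀ n₀ ((m₀ : ℤ), (n₀ : ℤ)) 2 1 = 1 := by
    unfold fourCornerCoin
    rw [if_neg (by intro h; rw [Prod.mk.injEq] at h; omega),
      if_neg (by intro h; rw [Prod.mk.injEq] at h; omega), if_pos rfl]
    simp
  have hf4 : fourCornerCoin m₀ n₀ ((0 : ℤ), (n₀ : ℤ)) 1 3 = 1 := by
    unfold fourCornerCoin
    rw [if_neg (by intro h; rw [Prod.mk.injEq] at h; omega),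
      if_neg (by intro h; rw [Prod.mk.injEq] at h; omega),
      if_neg (by intro h; rw [Prod.mk.injEq] at h; omega), if_pos rfl]
    simp
  have hf5 : fourCornerCoin m₀ n₀ ((0 : ℤ), (0 : ℤ)) 1 2 = 1 := by
    unfold fourCornerCoin
    rw [if_pos rfl]
    simp
  have hf6 : fourCornerCoin m₀ n₀ ((m₀ : ℤ), (0 : ℤ)) 3 1 = 1 := by
    unfold fourCornerCoin
    rw [if_neg (by intro h; rw [Prod.mk.injEq] at h; omega), if_pos rfl]
    simp
  have hf7 : fourCornerCoin m₀ n₀ ((m₀ : ℤ), (n₀ : ℤ)) 0 3 = 1 := by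
    unfold fourCornerCoin
    rw [if_neg (by intro h; rw [Prod.mk.injEq] at h; omega),
      if_neg (by intro h; rw [Prod.mk.injEq] at h; omega), if_pos rfl]
    simp
  have hf8 : fourCornerCoin m₀ n₀ ((0 : ℤ), (n₀ : ℤ)) 2 0 = 1 := by
    unfold fourCornerCoin
    rw [if_neg (by intro h; rw [Prod.mk.injEq] at h; omega),
      if_neg (by intro h; rw [Prod.mk.injEq] at h; omega),
      if_neg (by intro h; rw [Prod.mk.injEq] at h; omega), if_pos rfl]
    simp
  have ne1 := key_ne _ 3 0 hCor1 hf1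
  have ne2 := key_ne _ 0 2 hCor2 hf2
  have ne3 := key_ne _ 2 1 hCor3 hf3
  have ne4 := key_ne _ 1 3 hCor4 hf4
  have ne5 := key_ne _ 1 2 hCor1 hf5
  have ne6 := key_ne _ 3 1 hCor2 hf6
  have ne7 := key_ne _ 0 3 hCor3 hf7
  have ne8 := key_ne _ 2 0 hCor4 hf8
  have hPne : cPlus m₀ n₀ Cε ≠ 0 := by
    simp only [cPlus]
    exact mul_ne_zero (mul_ne_zero (mul_ne_zero ne1 ne2) ne3) ne4
  have hMne : cMinus m₀ n₀ Cε ≠ 0 := by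
    simp only [cMinus]
    exact mul_ne_zero (mul_ne_zero (mul_ne_zero ne5 ne6) ne7) ne8
  have habs_le : ∀ (x : Site) (i j : Chir), ‖Cε x i j‖ ≤ 1 :=
    fun x i j => entryAbsLe (Cε x) (hCε.1 x) i j
  have habs_nn : ∀ (x : Site) (i j : Chir), 0 ≤ ‖Cε x i j‖ :=
    fun x i j => norm_nonneg _
  have hPabs : ‖cPlus m₀ n₀ Cε‖ ≤ 1 := by
    simp only [cPlus, norm_mul]
    have a1 := habs_le ((0 : ℤ), (0 : ℤ)) 3 0
    have a2 := habs_le ((m₀ : ℤ), (0 : ℤ)) 0 2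
    have a3 := habs_le ((m₀ : ℤ), (n₀ : ℤ)) 2 1
    have a4 := habs_le ((0 : ℤ), (n₀ : ℤ)) 1 3
    have b1 := habs_nn ((0 : ℤ), (0 : ℤ)) 3 0
    have b2 := habs_nn ((m₀ : ℤ), (0 : ℤ)) 0 2
    have b3 := habs_nn ((m₀ : ℤ), (n₀ : ℤ)) 2 1
    have b4 := habs_nn ((0 : ℤ), (n₀ : ℤ)) 1 3
    exact prod4_le_one b1 a1 b2 a2 b3 a3 b4 a4
  have hMabs : ‖cMinus m₀ n₀ Cε‖ ≤ 1 := by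
    simp only [cMinus, norm_mul]
    have a1 := habs_le ((0 : ℤ), (0 : ℤ)) 1 2
    have a2 := habs_le ((m₀ : ℤ), (0 : ℤ)) 3 1
    have a3 := habs_le ((m₀ : ℤ), (n₀ : ℤ)) 0 3
    have a4 := habs_le ((0 : ℤ), (n₀ : ℤ)) 2 0
    have b1 := habs_nn ((0 : ℤ), (0 : ℤ)) 1 2
    have b2 := habs_nn ((m₀ : ℤ), (0 : ℤ)) 3 1
    have b3 := habs_nn ((m₀ : ℤ), (n₀ : ℤ)) 0 3
    have b4 := habs_nn ((0 : ℤ), (n₀ : ℤ)) 2 0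
    exact prod4_le_one b1 a1 b2 a2 b3 a3 b4 a4
  have hexp : ∀ κ : ℂ, Complex.exp (-(2 * ((m₀ : ℂ) + (n₀ : ℂ)) * Complex.I * κ))
      = Complex.exp (-(Complex.I * κ)) ^ (2 * (m₀ + n₀)).toNat := by
    intro κ
    rw [show -(2 * ((m₀ : ℂ) + (n₀ : ℂ)) * Complex.I * κ)
        = ((2 * (m₀ + n₀) : ℤ) : ℂ) * -(Complex.I * κ) by push_cast; ring,
      Complex.exp_int_mul, ← zpow_natCast]
    congr 1
    omega
  have hIlog : ∀ z : ℂ, -(Complex.I * (Complex.I * Complex.log z)) = Complex.log z := by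
    intro z
    rw [← mul_assoc, Complex.I_mul_I]
    ring
  have hcount : ∀ c : ℂ, c ≠ 0 → ‖c‖ ≤ 1 →
      {z : ℂ | ∃ κ : ℂ, κ.im ≤ 0 ∧ z = Complex.exp (-(Complex.I * κ)) ∧
        Complex.exp (-(2 * ((m₀ : ℂ) + (n₀ : ℂ)) * Complex.I * κ)) = c}
      = {z : ℂ | z ^ (2 * (m₀ + n₀)).toNat = c} := by
    intro c hc hcabs
    ext z
    simp only [Set.mem_setOf_eq]
    constructor
    · rintro ⟨κ, hκ, rfl, hp⟩
      rw [hexp κ] at hp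
      exact hp
    · intro hz
      have hz0 : z ≠ 0 := by
        intro h0
        rw [h0, zero_pow (by omega : (2 * (m₀ + n₀)).toNat ≠ 0)] at hz
        exact hc hz.symm
      have habs : ‖z‖ ≤ 1 := by
        by_contra hgt
        push_neg at hgt
        have h1 : (1 : ℝ) < ‖z‖ ^ (2 * (m₀ + n₀)).toNat :=
          one_lt_pow₀ hgt (by omega)
        rw [← norm_pow, hz] at h1
        linarith
      refine ⟨Complex.I * Complex.log z, ?_, ?_, ?_⟩
      · have h2 : (Complex.I * Complex.log z).im = Real.log ‖z‖ := by
          simp [Complex.mul_im, Complex.log_re]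
        rw [h2]
        exact Real.log_nonpos (norm_nonneg _) habs
      · rw [hIlog z, Complex.exp_log hz0]
      · rw [hexp, hIlog z, Complex.exp_log hz0]
        exact hz
  refine ⟨?_, ?_, ?_, ?_⟩
  · intro κ hκ
    constructor
    · rintro ⟨u, hne0, hout, hsol⟩
      by_contra hcon
      push_neg at hcon
      obtain ⟨hc1, hc2⟩ := hcon
      have key := keyLemma m₀ n₀ hm hn ε Cε hCε κ u hout hsol
      rw [hexp κ] at hc1 hc2
      have hα : u (0, 0) 0 = 0 := by
        have h := key.1
        have h2 : (Complex.exp (-(Complex.I * κ)) ^ (2 * (m₀ + n₀)).toNat - cPlus m₀ n₀ Cε)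
            * u (0, 0) 0 = 0 := by linear_combination h
        rcases mul_eq_zero.mp h2 with h3 | h3
        · exact absurd (sub_eq_zero.mp h3) hc1
        · exact h3
      have hγ : u (0, 0) 2 = 0 := by
        have h := key.2.1
        have h2 : (Complex.exp (-(Complex.I * κ)) ^ (2 * (m₀ + n₀)).toNat - cMinus m₀ n₀ Cε)
            * u (0, 0) 2 = 0 := by linear_combination h
        rcases mul_eq_zero.mp h2 with h3 | h3
        · exact absurd (sub_eq_zero.mp h3) hc2
        · exact h3
      exact hne0 (funext fun x => funext fun i => key.2.2 hα hγ x i)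
    · rintro (h | h)
      · exact existsPlus m₀ n₀ hm hn ε Cε hCε κ ((hexp κ).symm.trans h)
      · exact existsMinus m₀ n₀ hm hn ε Cε hCε κ ((hexp κ).symm.trans h)
  · intro κ hκ u hout hsol hvan
    have key := keyLemma m₀ n₀ hm hn ε Cε hCε κ u hout hsol
    have hα : u (0, 0) 0 = 0 :=
      hvan (((0 : ℤ), (0 : ℤ)), (0 : Chir))
        (Set.mem_union_left _ (Set.mem_union_right _ ⟨0, le_rfl, by omega, rfl⟩))
    have hγ : u (0, 0) 2 = 0 :=
      hvan (((0 : ℤ), (0 : ℤ)), (2 : Chir))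
        (Set.mem_union_right _ (Set.mem_union_right _ ⟨0, le_rfl, by omega, rfl⟩))
    exact key.2.2 hα hγ
  · rw [hcount _ hPne hPabs]
    exact count_pow _ (by omega) _ hPne
  · rw [hcount _ hMne hMabs]
    exact count_pow _ (by omega) _ hMne

end QWPaper
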